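/- arXiv:1407.1121 — 4 statements merged into one kernel-verified Lean document; each statement's English description precedes it below -/
import Mathlib

section
/- Suppose the Frugal-1U median process starts at the true median, i.e. m̃_0 = M with F(M) = 1/2. Then for every t ≥ 1 and every ε ∈ (0,1), the probability that F(m̃_t) > 1/2 + 2·√(δ·ln(t/ε)) is at most ε. -/
open MeasureTheory ProbabilityTheory
open Finset

/-- One step of the Frugal-1U process as a function of the current state and the
fresh randomness. -/
noncomputable def frugalStep (x : ℤ) (y : ℤ × ℝ) : ℤ :=
  if x < y.1 ∧ (1:ℝ)/2 < y.2 then x+1 else if y.1 < x ∧ (1:ℝ)/2 < y.2 then x-1 else x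

lemma frugalStep_meas : Measurable (fun p : ℤ × (ℤ × ℝ) => frugalStep p.1 p.2) := by
  unfold frugalStep
  apply Measurable.ite
  · have h1 : MeasurableSet {p : ℤ × (ℤ × ℝ) | p.1 < p.2.1} := by
      have : {p : ℤ × (ℤ × ℝ) | p.1 < p.2.1}
          = (fun p : ℤ × (ℤ × ℝ) => (p.1, p.2.1)) ⁻¹' {q : ℤ × ℤ | q.1 < q.2} := rfl
      rw [this]
      exact (measurable_fst.prodMk (measurable_snd.fst)) .of_discrete
    have h2 : MeasurableSet {p : ℤ × (ℤ × ℝ) | (1:ℝ)/2 < p.2.2} :=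
      measurable_snd.snd measurableSet_Ioi
    exact h1.inter h2
  · exact (measurable_fst.add_const 1)
  · apply Measurable.ite
    · have h1 : MeasurableSet {p : ℤ × (ℤ × ℝ) | p.2.1 < p.1} := by
        have : {p : ℤ × (ℤ × ℝ) | p.2.1 < p.1}
            = (fun p : ℤ × (ℤ × ℝ) => (p.1, p.2.1)) ⁻¹' {q : ℤ × ℤ | q.2 < q.1} := rfl
        rw [this]
        exact (measurable_fst.prodMk (measurable_snd.fst)) .of_discrete
      have h2 : MeasurableSet {p : ℤ × (ℤ × ℝ) | (1:ℝ)/2 < p.2.2} :=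
        measurable_snd.snd measurableSet_Ioi
      exact h1.inter h2
    · exact (measurable_fst.sub_const 1)
    · exact measurable_fst

/-- The one-step transition integral for the Frugal-1U process. -/
lemma frugal_inner_integral (μ : Measure ℤ) [IsProbabilityMeasure μ] (g : ℤ → ℝ) (x : ℤ) :
    ∫ y, g (frugalStep x y) ∂(μ.prod (volume.restrict (Set.Icc (0:ℝ) 1)))
      = g x + (g (x+1) - g x) * ((μ (Set.Ioi x)).toReal * (1/2))
            + (g (x-1) - g x) * ((μ (Set.Iio x)).toReal * (1/2)) := by
  set ν := μ.prod (volume.restrict (Set.Icc (0:ℝ) 1)) with hν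
  have hvol : IsProbabilityMeasure (volume.restrict (Set.Icc (0:ℝ) 1)) := by
    constructor; simp [Real.volume_Icc]
  have hprob : IsProbabilityMeasure ν := by rw [hν]; infer_instance
  set A : Set (ℤ × ℝ) := Set.Ioi x ×ˢ Set.Ioi (1/2 : ℝ) with hA
  set B : Set (ℤ × ℝ) := Set.Iio x ×ˢ Set.Ioi (1/2 : ℝ) with hB
  have hAm : MeasurableSet A := MeasurableSet.prod .of_discrete measurableSet_Ioi
  have hBm : MeasurableSet B := MeasurableSet.prod .of_discrete measurableSet_Ioi
  have hfun : (fun y => g (frugalStep x y)) = fun y =>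
      g x + (A.indicator (fun _ => g (x+1) - g x) y + B.indicator (fun _ => g (x-1) - g x) y) := by
    funext y
    by_cases h1 : x < y.1 ∧ (1:ℝ)/2 < y.2
    · have hyA : y ∈ A := ⟨h1.1, h1.2⟩
      have hyB : y ∉ B := fun hb => lt_asymm h1.1 hb.1
      simp only [frugalStep, if_pos h1, Set.indicator_of_mem hyA, Set.indicator_of_notMem hyB]
      ring
    · by_cases h2 : y.1 < x ∧ (1:ℝ)/2 < y.2
      · have hyA : y ∉ A := fun ha => lt_asymm h2.1 ha.1
        have hyB : y ∈ B := ⟨h2.1, h2.2⟩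
        simp only [frugalStep, if_neg h1, if_pos h2, Set.indicator_of_mem hyB,
          Set.indicator_of_notMem hyA]
        ring
      · have hyA : y ∉ A := fun ha => h1 ⟨ha.1, ha.2⟩
        have hyB : y ∉ B := fun hb => h2 ⟨hb.1, hb.2⟩
        simp only [frugalStep, if_neg h1, if_neg h2, Set.indicator_of_notMem hyA,
          Set.indicator_of_notMem hyB]
        ring
  rw [hfun]
  have hiA : Integrable (fun y => A.indicator (fun _ => g (x+1) - g x) y) ν :=
    (integrable_const _).indicator hAm
  have hiB : Integrable (fun y => B.indicator (fun _ => g (x-1) - g x) y) ν :=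
    (integrable_const _).indicator hBm
  have hiAB : Integrable (fun y => A.indicator (fun _ => g (x+1) - g x) y
      + B.indicator (fun _ => g (x-1) - g x) y) ν := hiA.add hiB
  rw [integral_add (integrable_const _) hiAB, integral_add hiA hiB,
    integral_indicator_const _ hAm, integral_indicator_const _ hBm, integral_const]
  have hvol2 : (volume.restrict (Set.Icc (0:ℝ) 1)) (Set.Ioi (1/2 : ℝ)) = ENNReal.ofReal (1/2) := by
    rw [Measure.restrict_apply' measurableSet_Icc]
    have hset : Set.Ioi (1/2:ℝ) ∩ Set.Icc 0 1 = Set.Ioc (1/2:ℝ) 1 := by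
      ext y
      simp only [Set.mem_inter_iff, Set.mem_Ioi, Set.mem_Icc, Set.mem_Ioc]
      exact ⟨fun ⟨h1, _, h3⟩ => ⟨h1, h3⟩, fun ⟨h1, h2⟩ => ⟨h1, by linarith, h2⟩⟩
    rw [hset, Real.volume_Ioc]; norm_num
  have hνA : (ν A).toReal = (μ (Set.Ioi x)).toReal * (1/2) := by
    rw [hν, hA, Measure.prod_prod, hvol2, ENNReal.toReal_mul, ENNReal.toReal_ofReal (by norm_num)]
  have hνB : (ν B).toReal = (μ (Set.Iio x)).toReal * (1/2) := by
    rw [hν, hB, Measure.prod_prod, hvol2, ENNReal.toReal_mul, ENNReal.toReal_ofReal (by norm_num)]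
  simp only [measureReal_def]
  rw [hνA, hνB]
  simp [measure_univ, smul_eq_mul]
  ring

/-- Disintegration of an expectation of a function of the state and independent
fresh randomness. -/
lemma frugal_step_integral {Ω : Type*} [MeasureSpace Ω] [IsProbabilityMeasure (ℙ : Measure Ω)]
    (ν : Measure (ℤ × ℝ)) [IsProbabilityMeasure ν]
    (X : Ω → ℤ) (Y : Ω → ℤ × ℝ) (hX : Measurable X) (hYm : Measurable Y)
    (hind : IndepFun X Y ℙ) (hlawY : Measure.map Y ℙ = ν)
    (g : ℤ → ℝ) (C : ℝ) (hgC : ∀ z, |g z| ≤ C) :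
    ∫ ω, g (frugalStep (X ω) (Y ω)) ∂ℙ
      = ∫ x, ∫ y, g (frugalStep x y) ∂ν ∂(Measure.map X ℙ) := by
  have hg : Measurable g := measurable_of_countable g
  have hGm : Measurable (fun p : ℤ × (ℤ × ℝ) => g (frugalStep p.1 p.2)) :=
    hg.comp frugalStep_meas
  have hpair : Measurable (fun ω => (X ω, Y ω)) := hX.prodMk hYm
  have hmap : Measure.map (fun ω => (X ω, Y ω)) ℙ = (Measure.map X ℙ).prod ν := by
    rw [← hlawY]
    exact (indepFun_iff_map_prod_eq_prod_map_map hX.aemeasurable hYm.aemeasurable).1 hind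
  haveI : IsProbabilityMeasure (Measure.map X ℙ) := Measure.isProbabilityMeasure_map hX.aemeasurable
  have hint : Integrable (fun p : ℤ × (ℤ × ℝ) => g (frugalStep p.1 p.2))
      ((Measure.map X ℙ).prod ν) := by
    refine Integrable.mono' (integrable_const C) hGm.aestronglyMeasurable ?_
    filter_upwards with p using by simpa using hgC (frugalStep p.1 p.2)
  calc ∫ ω, g (frugalStep (X ω) (Y ω)) ∂ℙ
      = ∫ p, g (frugalStep p.1 p.2) ∂(Measure.map (fun ω => (X ω, Y ω)) ℙ) :=
        (integral_map hpair.aemeasurable hGm.aestronglyMeasurable).symm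
    _ = ∫ p, g (frugalStep p.1 p.2) ∂((Measure.map X ℙ).prod ν) := by rw [hmap]
    _ = ∫ x, ∫ y, g (frugalStep x y) ∂ν ∂(Measure.map X ℙ) := integral_prod _ hint

lemma frugal_volIcc_prob : IsProbabilityMeasure (volume.restrict (Set.Icc (0:ℝ) 1)) := by
  constructor; simp [Real.volume_Icc]

set_option maxHeartbeats 2000000 in
/-- If the Frugal-1U median process starts at the true median
(`m̃₀ = M` with `F(M) = 1/2`), then for every `t ≥ 1` and `ε ∈ (0,1)`,
`Pr[F(m̃_t) > 1/2 + 2√(δ·ln(t/ε))] ≤ ε`. -/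
theorem frugal1U_median_stability_right
    {Ω : Type*} [MeasureSpace Ω] [IsProbabilityMeasure (ℙ : Measure Ω)]
    (μ : Measure ℤ) [IsProbabilityMeasure μ]
    (δ : ℝ) (hδ0 : 0 < δ) (hδ1 : δ < 1)
    (hmass : ∀ x : ℤ, (μ {x}).toReal ≤ δ)
    (F : ℤ → ℝ) (hF : ∀ x : ℤ, F x = (μ {y : ℤ | y ≤ x}).toReal)
    (s : ℕ → Ω → ℤ) (u : ℕ → Ω → ℝ)
    (hs_meas : ∀ t, Measurable (s t)) (hu_meas : ∀ t, Measurable (u t))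
    (hlaw : ∀ t : ℕ, Measure.map (fun ω => (s t ω, u t ω)) ℙ
      = μ.prod (volume.restrict (Set.Icc (0:ℝ) 1)))
    (hindep : iIndepFun
      (fun t ω => (s t ω, u t ω)) ℙ)
    (m : ℕ → Ω → ℤ)
    (M : ℤ) (hmedian : F M = 1/2)
    (hm0 : ∀ ω, m 0 ω = M)
    (hrec : ∀ t ω, m (t+1) ω =
      if m t ω < s (t+1) ω ∧ (1:ℝ)/2 < u (t+1) ω then m t ω + 1
      else if s (t+1) ω < m t ω ∧ (1:ℝ)/2 < u (t+1) ω then m t ω - 1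
      else m t ω)
    (t : ℕ) (ht : 1 ≤ t) (ε : ℝ) (hε0 : 0 < ε) (hε1 : ε < 1) :
    ℙ {ω | 1/2 + 2 * Real.sqrt (δ * Real.log (t / ε)) < F (m t ω)}
      ≤ ENNReal.ofReal ε := by
  classical
  set lam : ℝ := 2 * Real.sqrt (δ * Real.log (t / ε)) with hlamdef
  -- basic facts about t/ε and lam
  have htR : (1:ℝ) ≤ (t:ℝ) := by exact_mod_cast ht
  have htε : (1:ℝ) < t / ε := by
    rw [lt_div_iff₀ hε0]; linarith
  have hlog : 0 < Real.log (t/ε) := Real.log_pos htε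
  have hlam0 : 0 < lam := by
    rw [hlamdef]
    have : 0 < Real.sqrt (δ * Real.log (t/ε)) := Real.sqrt_pos.2 (by positivity)
    linarith
  have hlamsq : lam^2 = 4 * (δ * Real.log (t/ε)) := by
    rw [hlamdef, mul_pow, Real.sq_sqrt (by positivity)]
    ring
  -- basic facts about F
  have hIic : ∀ x : ℤ, F x = (μ (Set.Iic x)).toReal := hF
  have hF_mono : Monotone F := by
    intro a b hab
    rw [hIic a, hIic b]
    exact ENNReal.toReal_mono (measure_ne_top _ _) (measure_mono (Set.Iic_subset_Iic.2 hab))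
  have hF0 : ∀ x, 0 ≤ F x := fun x => by rw [hIic x]; positivity
  have hF1 : ∀ x, F x ≤ 1 := by
    intro x; rw [hIic x]
    calc (μ (Set.Iic x)).toReal ≤ (1 : ENNReal).toReal :=
          ENNReal.toReal_mono ENNReal.one_ne_top prob_le_one
      _ = 1 := ENNReal.toReal_one
  have hIoi : ∀ x : ℤ, (μ (Set.Ioi x)).toReal = 1 - F x := by
    intro x
    have h1 : μ (Set.Ioi x) = 1 - μ (Set.Iic x) := by
      rw [← Set.compl_Iic]
      exact prob_compl_eq_one_sub measurableSet_Iic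
    rw [h1, hIic x, ENNReal.toReal_sub_of_le prob_le_one ENNReal.one_ne_top, ENNReal.toReal_one]
  have hIio : ∀ x : ℤ, (μ (Set.Iio x)).toReal = F (x-1) := by
    intro x
    rw [hIic]
    congr 2
    ext y; simp
  have hstep : ∀ x : ℤ, F x ≤ F (x-1) + δ := by
    intro x
    have hset : Set.Iic x = Set.Iic (x-1) ∪ {x} := by
      ext y; simp only [Set.mem_Iic, Set.mem_union, Set.mem_singleton_iff]; omega
    have hdisj : Disjoint (Set.Iic (x-1)) ({x} : Set ℤ) := by
      simp [Set.disjoint_singleton_right]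
    have : F x = F (x-1) + (μ {x}).toReal := by
      rw [hIic x, hIic (x-1), hset, measure_union hdisj (measurableSet_singleton x),
        ENNReal.toReal_add (measure_ne_top _ _) (measure_ne_top _ _)]
    rw [this]
    linarith [hmass x]
  -- trivial case : lam ≥ 1/2 makes the event empty
  by_cases hlam2 : lam < 1/2
  swap
  · have hempty : {ω | 1/2 + lam < F (m t ω)} = ∅ := by
      ext ω
      simp only [Set.mem_setOf_eq, Set.mem_empty_iff_false, iff_false, not_lt]
      have := hF1 (m t ω)
      push_neg at hlam2
      linarith
    rw [hempty]
    simp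
  -- main case
  rcases Set.eq_empty_or_nonempty {ω | 1/2 + lam < F (m t ω)} with hE | ⟨ω₀, hω₀⟩
  · rw [hE]; simp
  -- get the least level above the median with F exceeding the threshold
  have hPbdd : ∃ b : ℤ, ∀ z : ℤ, (M < z ∧ 1/2 + lam < F z) → b ≤ z := ⟨M, fun z hz => hz.1.le⟩
  have hPinh : ∃ z : ℤ, (M < z ∧ 1/2 + lam < F z) := by
    refine ⟨m t ω₀, ?_, hω₀⟩
    by_contra hc
    push_neg at hc
    have := hF_mono hc
    rw [hmedian] at this
    have hω := hω₀
    simp only [Set.mem_setOf_eq] at hω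
    linarith
  obtain ⟨L, ⟨hML, hFL⟩, hleast⟩ := Int.exists_least_of_bdd hPbdd hPinh
  have hmin : ∀ x : ℤ, M < x → x < L → F x ≤ 1/2 + lam := by
    intro x hx1 hx2
    by_contra hc
    push_neg at hc
    exact absurd (hleast x ⟨hx1, hc⟩) (by omega)
  -- the potential function
  set n : ℕ := (L - M).toNat with hndef
  have hn : (n : ℤ) = L - M := Int.toNat_of_nonneg (by omega)
  have hn1 : 1 ≤ n := by omega
  set p : ℤ → ℝ := fun x => (1 - F x)/2 with hpdef
  set q : ℤ → ℝ := fun x => F (x-1) / 2 with hqdef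
  set Δ : ℕ → ℝ := fun k => ∏ i ∈ range k, (q (M+1+(i:ℤ)) / p (M+1+(i:ℤ))) with hΔdef
  set g : ℤ → ℝ := fun x => ∑ i ∈ range (min (x - M).toNat n), Δ i with hgdef
  have hp0 : ∀ x, 0 ≤ p x := fun x => by
    simp only [hpdef]; linarith [hF1 x]
  have hq0 : ∀ x, 0 ≤ q x := fun x => by
    simp only [hqdef]; linarith [hF0 (x-1)]
  have hΔ0 : ∀ k, 0 ≤ Δ k := fun k =>
    prod_nonneg (fun i _ => div_nonneg (hq0 _) (hp0 _))
  have htel : ∀ (y : ℤ) (k : ℕ), F (y + k) ≤ F y + k * δ := by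
    intro y k
    induction k with
    | zero => simp
    | succ k ih =>
      have h1 := hstep (y + (k+1 : ℕ))
      have h2 : (y + (k+1 : ℕ)) - 1 = y + (k : ℕ) := by push_cast; ring
      rw [h2] at h1
      push_cast at ih h1 ⊢
      linarith
  have htel' : ∀ x y : ℤ, x ≤ y → F y ≤ F x + ((y:ℝ) - (x:ℝ)) * δ := by
    intro x y hxy
    have h := htel x (y - x).toNat
    have hc : ((y-x).toNat : ℤ) = y - x := Int.toNat_of_nonneg (by omega)
    rw [show x + ((y-x).toNat : ℤ) = y by omega] at h
    have hc2 : ((y-x).toNat : ℝ) = ((y:ℝ) - x) := by exact_mod_cast hc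
    rw [hc2] at h
    exact h
  have hnδ : lam < n * δ := by
    have h := htel' M L (by omega)
    rw [hmedian] at h
    have hc : ((L:ℝ) - M) = (n:ℝ) := by exact_mod_cast hn.symm
    rw [hc] at h
    linarith
  have hppos : ∀ x : ℤ, M ≤ x → x < L → 0 < p x := by
    intro x hx1 hx2
    have hFx : F x ≤ 1/2 + lam := by
      rcases eq_or_lt_of_le hx1 with h | h
      · rw [← h, hmedian]; linarith
      · exact hmin x h hx2
    simp only [hpdef]; linarith
  have hq14 : ∀ x : ℤ, M < x → 1/4 ≤ q x := by
    intro x hx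
    have : F M ≤ F (x-1) := hF_mono (by omega)
    simp only [hqdef]; rw [hmedian] at this; linarith
  have hr1 : ∀ i : ℕ, (i:ℤ) < (n:ℤ) - 1 → 1 ≤ q (M+1+(i:ℤ)) / p (M+1+(i:ℤ)) := by
    intro i hi
    have hx1 : M < M+1+(i:ℤ) := by omega
    have hx2 : M+1+(i:ℤ) < L := by omega
    have hpp := hppos _ (by omega) hx2
    rw [le_div_iff₀ hpp]
    have hq := hq14 _ hx1
    have hple : p (M+1+(i:ℤ)) ≤ 1/4 := by
      have : F M ≤ F (M+1+(i:ℤ)) := hF_mono (by omega)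
      simp only [hpdef]; rw [hmedian] at this; linarith
    linarith
  set K : ℕ := ⌊lam/(2*δ)⌋₊ with hKdef
  have hKle : (K:ℝ) ≤ lam/(2*δ) := Nat.floor_le (by positivity)
  have hKlt : lam/(2*δ) < K + 1 := Nat.lt_floor_add_one _
  have hKn : K ≤ n - 1 := by
    have h1 : (K:ℝ) < (n:ℝ) := by
      have h2 : lam / δ < n := by
        rw [div_lt_iff₀ hδ0]; linarith
      have h3 : lam/(2*δ) ≤ lam/δ := by
        apply div_le_div_of_nonneg_left hlam0.le hδ0; linarith
      linarith
    have : K < n := by exact_mod_cast h1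
    omega
  have hKδ : (K:ℝ) * δ ≤ lam / 2 := by
    calc (K:ℝ) * δ ≤ lam/(2*δ) * δ := mul_le_mul_of_nonneg_right hKle hδ0.le
      _ = lam / 2 := by field_simp
  have hexp : Real.exp lam ≤ 1/(1 - lam) := by
    rw [le_div_iff₀ (by linarith)]
    have h1 : 1 - lam ≤ Real.exp (-lam) := by
      have := Real.add_one_le_exp (-lam); linarith
    calc Real.exp lam * (1 - lam) ≤ Real.exp lam * Real.exp (-lam) :=
          mul_le_mul_of_nonneg_left h1 (Real.exp_pos _).le
      _ = 1 := by rw [← Real.exp_add]; simp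
  have hrtop : ∀ i : ℕ, (n:ℤ) - 1 - K ≤ i → (i:ℤ) < (n:ℤ) - 1 →
      Real.exp lam ≤ q (M+1+(i:ℤ)) / p (M+1+(i:ℤ)) := by
    intro i hi1 hi2
    set x := M+1+(i:ℤ) with hxdef
    have hx1 : M < x := by omega
    have hx2 : x < L := by omega
    have hpp := hppos _ (by omega) hx2
    have hlx : L - x ≤ (K:ℤ) := by omega
    have htel2 : F L ≤ F x + ((L:ℝ) - x) * δ := htel' x L (by omega)
    have hFx : 1/2 + lam/2 ≤ F x := by
      have h1 : ((L:ℝ) - x) * δ ≤ (K:ℝ) * δ := by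
        apply mul_le_mul_of_nonneg_right _ hδ0.le
        have : ((L - x : ℤ) : ℝ) ≤ (K:ℝ) := by exact_mod_cast hlx
        push_cast at this; linarith
      linarith
    have hq := hq14 _ hx1
    have hple : p x ≤ (1 - lam)/4 := by
      simp only [hpdef]; linarith
    have hne : (0:ℝ) < 1 - lam := by linarith
    rw [le_div_iff₀ hpp]
    calc Real.exp lam * p x ≤ (1/(1-lam)) * ((1-lam)/4) := by
          apply mul_le_mul hexp hple (hp0 _) ((Real.exp_pos lam).le.trans hexp)
      _ = 1/4 := by field_simp
      _ ≤ q x := hq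
  have hΔlow : ∀ k : ℕ, k ≤ n - 1 → Real.exp (lam * (k - (n - 1 - K) : ℕ)) ≤ Δ k := by
    intro k
    induction k with
    | zero => intro _; simp [hΔdef]
    | succ k ih =>
      intro hk1
      have hk : k ≤ n - 1 := by omega
      have ihk := ih hk
      have hΔsucc : Δ (k+1) = Δ k * (q (M+1+(k:ℤ)) / p (M+1+(k:ℤ))) := by
        simp only [hΔdef]; rw [prod_range_succ]
      have hkn : (k:ℤ) < (n:ℤ) - 1 := by
        have : k + 1 ≤ n - 1 := hk1
        omega
      rcases lt_or_ge k (n - 1 - K) with hc | hc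
      · have : (k+1) - (n-1-K) = 0 := by omega
        rw [this, hΔsucc]
        simp only [Nat.cast_zero, mul_zero, Real.exp_zero]
        have h1 : (1:ℝ) ≤ Δ k := by
          have : (k : ℕ) - (n-1-K) = 0 := by omega
          rw [this] at ihk; simpa using ihk
        calc (1:ℝ) = 1 * 1 := by ring
          _ ≤ Δ k * (q (M+1+(k:ℤ)) / p (M+1+(k:ℤ))) :=
            mul_le_mul h1 (hr1 k hkn) zero_le_one (le_trans zero_le_one h1)
      · have heq : (k+1) - (n-1-K) = (k - (n-1-K)) + 1 := by omega
        rw [heq, hΔsucc]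
        push_cast
        rw [mul_add, mul_one, Real.exp_add]
        have htop := hrtop k (by omega) hkn
        apply mul_le_mul ihk htop (Real.exp_pos _).le (le_trans (Real.exp_pos _).le ihk)
  have hgL : Real.exp (lam * K) ≤ g L := by
    have h1 := hΔlow (n-1) le_rfl
    have h2 : (n-1) - (n-1-K) = K := by omega
    rw [h2] at h1
    have h3 : g L = ∑ i ∈ range n, Δ i := by
      simp only [hgdef]
      rw [← hndef, min_self]
    rw [h3]
    calc Real.exp (lam * K) ≤ Δ (n-1) := h1
      _ ≤ ∑ i ∈ range n, Δ i := by
          apply single_le_sum (fun i _ => hΔ0 i)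
          rw [mem_range]; omega
  -- g properties
  have hgmono : Monotone g := by
    intro a b hab
    simp only [hgdef]
    apply sum_le_sum_of_subset_of_nonneg
    · apply range_subset_range.2
      apply min_le_min_right
      exact Int.toNat_le_toNat (by omega)
    · intro i _ _; exact hΔ0 i
  have hg0 : ∀ x, 0 ≤ g x := fun x => sum_nonneg (fun i _ => hΔ0 i)
  have hgM : g M = 0 := by simp [hgdef]
  set C : ℝ := ∑ i ∈ range n, Δ i with hCdef
  have hgub : ∀ x, g x ≤ C := by
    intro x
    simp only [hgdef, hCdef]
    apply sum_le_sum_of_subset_of_nonneg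
    · exact range_subset_range.2 (min_le_right _ _)
    · intro i _ _; exact hΔ0 i
  have hgabs : ∀ x, |g x| ≤ C := fun x => abs_le.2 ⟨by linarith [hg0 x, hgub x], hgub x⟩
  -- drift
  have hdrift : ∀ x : ℤ, p x * (g (x+1) - g x) - q x * (g x - g (x-1)) ≤ 1/4 := by
    intro x
    rcases lt_trichotomy x M with hx | hx | hx
    · have e1 : g (x+1) = 0 := by
        simp only [hgdef]
        have : (x+1-M).toNat = 0 := by omega
        rw [this]; simp
      have e2 : g x = 0 := by
        simp only [hgdef]
        have : (x-M).toNat = 0 := by omega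
        rw [this]; simp
      have e3 : g (x-1) = 0 := by
        simp only [hgdef]
        have : (x-1-M).toNat = 0 := by omega
        rw [this]; simp
      rw [e1, e2, e3]; norm_num
    · rw [hx]
      have e2 : g M = 0 := hgM
      have e3 : g (M-1) = 0 := by
        simp only [hgdef]
        have : (M-1-M).toNat = 0 := by omega
        rw [this]; simp
      have e1 : g (M+1) = 1 := by
        simp only [hgdef]
        have h1 : (M+1-M).toNat = 1 := by omega
        rw [h1, min_eq_left hn1, sum_range_one]
        simp [hΔdef]
      rw [e1, e2, e3]
      have : p M = 1/4 := by simp only [hpdef]; rw [hmedian]; norm_num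
      rw [this]; norm_num
    · set j : ℕ := (x - M).toNat with hjdef
      have hj1 : 1 ≤ j := by omega
      have hxj : x = M + (j:ℤ) := by omega
      have ej : (x - M).toNat = j := rfl
      have ej1 : (x+1-M).toNat = j+1 := by omega
      have ej2 : (x-1-M).toNat = j-1 := by omega
      rcases le_or_gt n j with hc | hc
      · have e1 : g (x+1) = g x := by
          simp only [hgdef, ej, ej1]
          have h1 : min (j+1) n = n := by omega
          have h2 : min j n = n := by omega
          rw [h1, h2]
        have e2 : g (x-1) ≤ g x := hgmono (by omega)
        have h3 : p x * (g (x+1) - g x) = 0 := by rw [e1]; ring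
        rw [h3]
        have : 0 ≤ q x * (g x - g (x-1)) := mul_nonneg (hq0 x) (by linarith)
        linarith
      · have e1 : g (x+1) - g x = Δ j := by
          simp only [hgdef, ej, ej1]
          have h1 : min (j+1) n = j+1 := by omega
          have h2 : min j n = j := by omega
          rw [h1, h2, sum_range_succ]
          ring
        have e2 : g x - g (x-1) = Δ (j-1) := by
          simp only [hgdef, ej, ej2]
          have h1 : min j n = j := by omega
          have h2 : min (j-1) n = j-1 := by omega
          rw [h1, h2]
          have h3 : j = (j-1) + 1 := by omega
          rw [h3, sum_range_succ]
          simp only [Nat.add_sub_cancel]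
          ring
        rw [e1, e2]
        have hΔj : Δ j = Δ (j-1) * (q x / p x) := by
          have h3 : j = (j-1) + 1 := by omega
          have h4 : M+1+((j-1 : ℕ):ℤ) = x := by omega
          conv_lhs => rw [h3]
          simp only [hΔdef]
          rw [prod_range_succ, h4]
        have hpp : 0 < p x := hppos x (by omega) (by omega)
        rw [hΔj]
        have e4 : p x * (Δ (j-1) * (q x / p x)) = Δ (j-1) * q x := by
          field_simp
        rw [e4]
        have e5 : q x * Δ (j-1) = Δ (j-1) * q x := by ring
        rw [e5]
        norm_num
  -- probabilistic part
  set Y : ℕ → Ω → ℤ × ℝ := fun i ω => (s i ω, u i ω) with hYdef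
  have hYm : ∀ i, Measurable (Y i) := fun i => (hs_meas i).prodMk (hu_meas i)
  have hrec' : ∀ j ω, m (j+1) ω = frugalStep (m j ω) (Y (j+1) ω) := by
    intro j ω; rw [hrec j ω]; rfl
  have key : ∀ j : ℕ, ∃ φ : ((Finset.range (j+1) : Finset ℕ) → ℤ × ℝ) → ℤ,
      Measurable φ ∧ ∀ ω, m j ω = φ (fun i => Y i ω) := by
    intro j
    induction j with
    | zero =>
      exact ⟨fun _ => M, measurable_const, fun ω => (hm0 ω)⟩
    | succ j ih =>
      obtain ⟨φ, hφm, hφ⟩ := ih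
      refine ⟨fun v => frugalStep (φ (fun i => v ⟨(i : ℕ), by
          have := i.2; simp only [Finset.mem_range] at this ⊢; omega⟩))
          (v ⟨j+1, by simp⟩), ?_, ?_⟩
      · exact frugalStep_meas.comp (Measurable.prodMk
          (hφm.comp (measurable_pi_lambda _ (fun i => measurable_pi_apply _)))
          (measurable_pi_apply _))
      · intro ω
        rw [hrec' j ω, hφ ω]
  have hmeas : ∀ j : ℕ, Measurable (m j) ∧ IndepFun (m j) (Y (j+1)) ℙ := by
    intro j
    obtain ⟨φ, hφm, hφ⟩ := key j
    have hmj : Measurable (m j) := by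
      have : m j = fun ω => φ (fun i => Y i ω) := funext hφ
      rw [this]
      exact hφm.comp (measurable_pi_lambda _ (fun i => hYm i))
    refine ⟨hmj, ?_⟩
    have hdisj : Disjoint (Finset.range (j+1)) ({j+1} : Finset ℕ) := by
      simp [Finset.disjoint_singleton_right]
    have hind := hindep.indepFun_finset (Finset.range (j+1)) {j+1} hdisj hYm
    have hcomp := hind.comp (φ := φ)
      (ψ := fun v : (({j+1} : Finset ℕ)) → ℤ × ℝ => v ⟨j+1, by simp⟩)
      hφm (show Measurable (fun v : (({j+1} : Finset ℕ)) → ℤ × ℝ => v ⟨j+1, by simp⟩) from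
        measurable_pi_apply _)
    have h2 : m j = φ ∘ (fun a (i : (Finset.range (j+1) : Finset ℕ)) => Y i a) := funext hφ
    rw [h2]
    exact hcomp
  set ν : Measure (ℤ × ℝ) := μ.prod (volume.restrict (Set.Icc (0:ℝ) 1)) with hνdef
  haveI hIccP : IsProbabilityMeasure (volume.restrict (Set.Icc (0:ℝ) 1)) := frugal_volIcc_prob
  haveI hνprob : IsProbabilityMeasure ν := by
    rw [hνdef]; infer_instance
  have hgmeas : Measurable g := measurable_of_countable g
  have hCnn : 0 ≤ C := le_trans (hg0 M) (hgub M)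
  -- one-step expectation bound
  have hstepE : ∀ j : ℕ, ∫ ω, g (m (j+1) ω) ∂ℙ ≤ (∫ ω, g (m j ω) ∂ℙ) + 1/4 := by
    intro j
    obtain ⟨hmj, hind⟩ := hmeas j
    haveI : IsProbabilityMeasure (Measure.map (m j) ℙ) :=
      Measure.isProbabilityMeasure_map hmj.aemeasurable
    have h1 : ∫ ω, g (m (j+1) ω) ∂ℙ
        = ∫ x, ∫ y, g (frugalStep x y) ∂ν ∂(Measure.map (m j) ℙ) := by
      have hfeq : (fun ω => g (m (j+1) ω))
          = fun ω => g (frugalStep (m j ω) (Y (j+1) ω)) := funext fun ω => by rw [hrec' j ω]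
      rw [hfeq]
      exact frugal_step_integral ν (m j) (Y (j+1)) hmj (hYm _) hind (hlaw (j+1)) g C hgabs
    have h2 : (fun x : ℤ => ∫ y, g (frugalStep x y) ∂ν)
        = fun x => g x + (g (x+1) - g x) * p x + (g (x-1) - g x) * q x := by
      funext x
      rw [hνdef, frugal_inner_integral μ g x, hIoi, hIio]
      simp only [hpdef, hqdef]
      ring
    rw [h1, h2]
    have hptle : ∀ x, p x ≤ 1/2 := fun x => by simp only [hpdef]; linarith [hF0 x]
    have hqtle : ∀ x, q x ≤ 1/2 := fun x => by simp only [hqdef]; linarith [hF1 (x-1)]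
    have hdabs : ∀ a b : ℤ, |g a - g b| ≤ C := by
      intro a b
      rw [abs_le]
      constructor
      · linarith [hg0 a, hgub b]
      · linarith [hgub a, hg0 b]
    have hbd : ∀ x : ℤ, |g x + (g (x+1) - g x) * p x + (g (x-1) - g x) * q x| ≤ 2*C := by
      intro x
      have b1 : |g x| ≤ C := hgabs x
      have b2 : |(g (x+1) - g x) * p x| ≤ C * (1/2) := by
        rw [abs_mul, abs_of_nonneg (hp0 x)]
        exact mul_le_mul (hdabs _ _) (hptle x) (hp0 x) hCnn
      have b3 : |(g (x-1) - g x) * q x| ≤ C * (1/2) := by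
        rw [abs_mul, abs_of_nonneg (hq0 x)]
        exact mul_le_mul (hdabs _ _) (hqtle x) (hq0 x) hCnn
      calc |g x + (g (x+1) - g x) * p x + (g (x-1) - g x) * q x|
          ≤ |g x + (g (x+1) - g x) * p x| + |(g (x-1) - g x) * q x| := abs_add_le _ _
        _ ≤ |g x| + |(g (x+1) - g x) * p x| + |(g (x-1) - g x) * q x| := by
            linarith [abs_add_le (g x) ((g (x+1) - g x) * p x)]
        _ ≤ 2*C := by linarith
    have hint1 : Integrable (fun x => g x + (g (x+1) - g x) * p x + (g (x-1) - g x) * q x)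
        (Measure.map (m j) ℙ) := by
      refine Integrable.mono' (integrable_const (2*C))
        (measurable_of_countable _).aestronglyMeasurable ?_
      filter_upwards with x using by simpa using hbd x
    have hintg' : Integrable g (Measure.map (m j) ℙ) := by
      refine Integrable.mono' (integrable_const C) hgmeas.aestronglyMeasurable ?_
      filter_upwards with x using by simpa using hgabs x
    have hint2 : Integrable (fun x => g x + 1/4) (Measure.map (m j) ℙ) :=
      hintg'.add (integrable_const _)
    have hmono2 : ∫ x, (g x + (g (x+1) - g x) * p x + (g (x-1) - g x) * q x)
          ∂(Measure.map (m j) ℙ)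
        ≤ ∫ x, (g x + 1/4) ∂(Measure.map (m j) ℙ) := by
      apply integral_mono hint1 hint2
      intro x
      have := hdrift x
      simp only
      linarith
    have hsplit2 : ∫ x, (g x + 1/4) ∂(Measure.map (m j) ℙ)
        = (∫ x, g x ∂(Measure.map (m j) ℙ)) + 1/4 := by
      rw [integral_add hintg' (integrable_const _), integral_const]
      simp
    have hback : ∫ x, g x ∂(Measure.map (m j) ℙ) = ∫ ω, g (m j ω) ∂ℙ :=
      integral_map hmj.aemeasurable hgmeas.aestronglyMeasurable
    calc ∫ x, (g x + (g (x+1) - g x) * p x + (g (x-1) - g x) * q x) ∂(Measure.map (m j) ℙ)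
        ≤ ∫ x, (g x + 1/4) ∂(Measure.map (m j) ℙ) := hmono2
      _ = (∫ ω, g (m j ω) ∂ℙ) + 1/4 := by rw [hsplit2, hback]
  -- expectation bound by induction
  have hE : ∀ j : ℕ, ∫ ω, g (m j ω) ∂ℙ ≤ (j:ℝ)/4 := by
    intro j
    induction j with
    | zero =>
      have hz : (fun ω => g (m 0 ω)) = fun _ => (0:ℝ) := funext fun ω => by rw [hm0 ω, hgM]
      rw [hz]
      simp
    | succ j ih =>
      have := hstepE j
      push_cast
      linarith
  -- Markov inequality
  have hintgt : Integrable (fun ω => g (m t ω)) ℙ := by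
    refine Integrable.mono' (integrable_const C)
      ((hgmeas.comp (hmeas t).1).aestronglyMeasurable) ?_
    filter_upwards with ω using by simpa using hgabs (m t ω)
  have hmarkov := mul_meas_ge_le_integral_of_nonneg
    (μ := ℙ) (f := fun ω => g (m t ω)) (ae_of_all _ fun ω => hg0 _) hintgt (g L)
  have hsubE : {ω | 1/2 + lam < F (m t ω)} ⊆ {ω | g L ≤ g (m t ω)} := by
    intro ω hω
    simp only [Set.mem_setOf_eq] at hω ⊢
    have hMlt : M < m t ω := by
      by_contra hc; push_neg at hc
      have := hF_mono hc; rw [hmedian] at this; linarith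
    exact hgmono (hleast _ ⟨hMlt, hω⟩)
  have hgLpos : 0 < g L := lt_of_lt_of_le (Real.exp_pos _) hgL
  -- numeric bound : g L ≥ t/(2 ε)
  have hexphalf : Real.exp ((1:ℝ)/2) < 2 := by
    have hadd : Real.exp ((1:ℝ)/2) * Real.exp ((1:ℝ)/2) = Real.exp 1 := by
      rw [← Real.exp_add]; norm_num
    nlinarith [Real.exp_one_lt_d9, Real.exp_pos ((1:ℝ)/2)]
  have hgL2 : (t:ℝ)/(2*ε) ≤ g L := by
    have hKlb : lam/(2*δ) - 1 ≤ (K:ℝ) := by linarith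
    have hlsq : lam^2/(2*δ) = 2 * Real.log (t/ε) := by
      rw [hlamsq]; field_simp; ring
    have h1 : Real.log (t/ε) - 1/2 ≤ lam * K := by
      have h2 : lam * (lam/(2*δ) - 1) ≤ lam * K := mul_le_mul_of_nonneg_left hKlb hlam0.le
      have h3 : lam * (lam/(2*δ) - 1) = lam^2/(2*δ) - lam := by ring
      rw [h3, hlsq] at h2
      linarith
    have h4 : (t/ε) * Real.exp (-(1/2:ℝ)) ≤ Real.exp (lam * K) := by
      have : (t/ε) * Real.exp (-(1/2:ℝ)) = Real.exp (Real.log (t/ε) + (-(1/2))) := by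
        rw [Real.exp_add, Real.exp_log (by linarith : (0:ℝ) < t/ε)]
      rw [this]
      apply Real.exp_le_exp.2
      linarith
    have h5 : (1:ℝ)/2 ≤ Real.exp (-(1/2:ℝ)) := by
      rw [Real.exp_neg]
      rw [le_inv_comm₀ (by norm_num) (Real.exp_pos _)]
      linarith
    have h6 : (t:ℝ)/(2*ε) ≤ (t/ε) * Real.exp (-(1/2:ℝ)) := by
      have he2 : (t:ℝ)/(2*ε) = (t/ε) * (1/2) := by
        rw [div_mul_div_comm, mul_one, mul_comm ε 2]
      rw [he2]
      exact mul_le_mul_of_nonneg_left h5 (div_nonneg (by positivity) hε0.le)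
    linarith [hgL]
  -- conclusion
  calc ℙ {ω | 1/2 + lam < F (m t ω)} ≤ ℙ {ω | g L ≤ g (m t ω)} := measure_mono hsubE
    _ ≤ ENNReal.ofReal ε := by
        rw [ENNReal.le_ofReal_iff_toReal_le (measure_ne_top _ _) hε0.le]
        set P : ℝ := (ℙ {ω | g L ≤ g (m t ω)}).toReal with hPdef
        have hP0 : 0 ≤ P := ENNReal.toReal_nonneg
        have h4 : g L * P ≤ (t:ℝ)/4 := le_trans hmarkov (hE t)
        have hPle : P ≤ ((t:ℝ)/4) / g L := by
          rw [le_div_iff₀ hgLpos]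
          linarith
        have hfin : ((t:ℝ)/4) / g L ≤ ε/2 := by
          rw [div_le_iff₀ hgLpos]
          have he1 : ε/2 * ((t:ℝ)/(2*ε)) = (t:ℝ)/4 := by
            field_simp
            ring
          calc (t:ℝ)/4 = ε/2 * ((t:ℝ)/(2*ε)) := he1.symm
            _ ≤ ε/2 * g L := mul_le_mul_of_nonneg_left hgL2 (by positivity)
        linarith
end

section
/- Suppose the Frugal-1U median process starts at the true median, i.e. m̃_0 = M with F(M) = 1/2. Then for every t ≥ 1 and every ε ∈ (0,1), the probability that |F(m̃_t) − 1/2| > 2·√(δ·ln(t/ε)) is at most ε (with the failure probability counting both the overshoot and undershoot events). -/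
open MeasureTheory ProbabilityTheory

section Helpers

private lemma frugal_ratio_mono {b c : ℝ} (hb : 0 ≤ b) (hbc : b ≤ c) (hc : c ≤ 1/2) :
    (1/2 - c) / (1/2 + c) ≤ (1/2 - b) / (1/2 + b) := by
  rw [div_le_div_iff₀ (by linarith) (by linarith)]
  nlinarith

set_option maxHeartbeats 1000000 in
private lemma frugal_oneSide (G P : ℕ → ℝ) (a d : ℝ) (t : ℕ)
    (ha : 0 < a) (ha4 : a < 1/4) (hd : 0 < d)
    (hG0 : G 0 = 0) (hGmono : Monotone G) (hGstep : ∀ n, G (n+1) ≤ G n + d)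
    (hGhalf : ∀ n, G n ≤ 1/2)
    (hP0 : P 0 = 1) (hPnn : ∀ n, 0 ≤ P n)
    (hratio : ∀ n, P (n+1) ≤ P n * ((1/2 - G n) / (1/2 + G n)))
    (hne : ∃ n ∈ Finset.Icc 1 t, 2*a < G n) :
    a / d < t ∧
      ∑ n ∈ (Finset.Icc 1 t).filter (fun n => 2*a < G n), P n
        ≤ Real.exp (3*a - 3*(a^2/d)) / (4*a) := by
  have hGnn : ∀ n, 0 ≤ G n := fun n => hG0 ▸ hGmono (Nat.zero_le n)
  have hPanti : ∀ k n, k ≤ n → P n ≤ P k := by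
    have hstep : ∀ n, P (n+1) ≤ P n := by
      intro n
      refine (hratio n).trans (mul_le_of_le_one_right (hPnn n) ?_)
      rw [div_le_one (by linarith [hGnn n])]
      linarith [hGnn n]
    intro k n hkn
    exact antitone_nat_of_succ_le hstep hkn
  have claim : ∀ (b : ℝ), 0 ≤ b → ∀ j k, b ≤ G j →
      P (j + k) ≤ P j * ((1/2 - b)/(1/2 + b))^k := by
    intro b hb j k hbj
    induction k with
    | zero => simp
    | succ k ih =>
      have hbG : b ≤ G (j + k) := hbj.trans (hGmono (Nat.le_add_right j k))
      have h1 : P (j + (k+1)) ≤ P (j + k) * ((1/2 - b)/(1/2 + b)) := by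
        have := hratio (j + k)
        refine this.trans ?_
        exact mul_le_mul_of_nonneg_left
          (frugal_ratio_mono hb hbG (hGhalf (j+k))) (hPnn (j+k))
      have hbhalf : b ≤ 1/2 := hbj.trans (hGhalf j)
      have hrnn : (0:ℝ) ≤ (1/2 - b)/(1/2 + b) := by
        apply div_nonneg <;> linarith
      calc P (j + (k+1)) ≤ P (j + k) * ((1/2 - b)/(1/2 + b)) := h1
        _ ≤ (P j * ((1/2 - b)/(1/2 + b))^k) * ((1/2 - b)/(1/2 + b)) :=
            mul_le_mul_of_nonneg_right ih hrnn
        _ = P j * ((1/2 - b)/(1/2 + b))^(k+1) := by ring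
  have hGdiff : ∀ n k, G (n + k) ≤ G n + k * d := by
    intro n k
    induction k with
    | zero => simp
    | succ k ih =>
      push_cast
      push_cast at ih
      calc G (n + (k+1)) = G ((n + k) + 1) := by ring_nf
        _ ≤ G (n + k) + d := hGstep (n+k)
        _ ≤ G n + k * d + d := by linarith
        _ = G n + (k + 1) * d := by ring
  obtain ⟨n₀, hn₀mem, hn₀G⟩ := hne
  set S := (Finset.Icc 1 t).filter (fun n => 2*a < G n) with hS
  have hSne : S.Nonempty := ⟨n₀, Finset.mem_filter.2 ⟨hn₀mem, hn₀G⟩⟩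
  set n₁ := S.min' hSne with hn₁
  have hn₁S : n₁ ∈ S := S.min'_mem hSne
  have hn₁Icc : n₁ ∈ Finset.Icc 1 t := (Finset.mem_filter.1 hn₁S).1
  have hn₁G : 2*a < G n₁ := (Finset.mem_filter.1 hn₁S).2
  have hn₁1 : 1 ≤ n₁ := (Finset.mem_Icc.1 hn₁Icc).1
  have hn₁t : n₁ ≤ t := (Finset.mem_Icc.1 hn₁Icc).2
  have hex : ∃ j, a ≤ G j := ⟨n₁, by linarith⟩
  set j₀ := Nat.find hex with hj₀def
  have hj₀ : a ≤ G j₀ := Nat.find_spec hex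
  have hj₀le : j₀ ≤ n₁ := Nat.find_min' hex (by linarith)
  have hj₀1 : 1 ≤ j₀ := by
    rcases Nat.eq_zero_or_pos j₀ with h | h
    · exfalso; rw [h] at hj₀; rw [hG0] at hj₀; linarith
    · exact h
  have hprev : ¬ a ≤ G (j₀ - 1) := Nat.find_min hex (by omega)
  set N := n₁ - j₀ with hN
  have hn₁eq : n₁ = j₀ + N := by omega
  have hcount : a < (N + 1 : ℕ) * d := by
    have h1 : G n₁ ≤ G (j₀ - 1) + ((N + 1 : ℕ)) * d := by
      have he : (j₀ - 1) + (N + 1) = n₁ := by omega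
      calc G n₁ = G ((j₀ - 1) + (N + 1)) := by rw [he]
        _ ≤ G (j₀ - 1) + ((N+1 : ℕ)) * d := hGdiff (j₀ - 1) (N+1)
    have h2 : G (j₀ - 1) < a := by linarith [not_le.1 hprev]
    linarith
  have hadlt : a / d < (N + 1 : ℕ) := by
    rw [div_lt_iff₀ hd]; push_cast at hcount ⊢; linarith
  have hN1t : ((N:ℝ) + 1) ≤ t := by
    have : N + 1 ≤ t := by omega
    exact_mod_cast this
  constructor
  · push_cast at hadlt; linarith
  have haN : a^2/d - a ≤ a * N := by
    have h0 : a/d - 1 ≤ (N:ℝ) := by push_cast at hadlt; linarith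
    have h2 : a * (a/d - 1) ≤ a * N :=
      mul_le_mul_of_nonneg_left h0 (le_of_lt ha)
    calc a^2/d - a = a * (a/d - 1) := by field_simp
      _ ≤ a * N := h2
  have hrat_exp : (1/2 - a)/(1/2 + a) ≤ Real.exp (-(3*a)) := by
    have h1 : 1 - a ≤ Real.exp (-a) := by
      have := Real.add_one_le_exp (-a); linarith
    have h2 : 1 - 2*a ≤ Real.exp (-(2*a)) := by
      have := Real.add_one_le_exp (-(2*a)); linarith
    have h3 : (1/2 - a)/(1/2 + a) ≤ (1 - 2*a) * (1 - a) := by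
      rw [div_le_iff₀ (by linarith)]
      nlinarith [sq_nonneg (a - 1/2), sq_nonneg a]
    have h4 : (1 - 2*a) * (1 - a) ≤ Real.exp (-(2*a)) * Real.exp (-a) := by
      apply mul_le_mul h2 h1 (by linarith) (le_of_lt (Real.exp_pos _))
    calc (1/2 - a)/(1/2 + a) ≤ (1 - 2*a) * (1 - a) := h3
      _ ≤ Real.exp (-(2*a)) * Real.exp (-a) := h4
      _ = Real.exp (-(3*a)) := by rw [← Real.exp_add]; ring_nf
  have hratnn : (0:ℝ) ≤ (1/2 - a)/(1/2 + a) := by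
    apply div_nonneg <;> linarith
  have hPn₁ : P n₁ ≤ Real.exp (3*a - 3*(a^2/d)) := by
    have h1 : P n₁ ≤ P j₀ * ((1/2 - a)/(1/2 + a))^N := by
      rw [hn₁eq]; exact claim a (le_of_lt ha) j₀ N hj₀
    have h2 : P j₀ ≤ 1 := hP0 ▸ hPanti 0 j₀ (Nat.zero_le _)
    have h3 : P n₁ ≤ ((1/2 - a)/(1/2 + a))^N := by
      calc P n₁ ≤ P j₀ * ((1/2 - a)/(1/2 + a))^N := h1
        _ ≤ 1 * ((1/2 - a)/(1/2 + a))^N :=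
            mul_le_mul_of_nonneg_right h2 (pow_nonneg hratnn N)
        _ = ((1/2 - a)/(1/2 + a))^N := one_mul _
    have h4 : ((1/2 - a)/(1/2 + a))^N ≤ (Real.exp (-(3*a)))^N :=
      pow_le_pow_left₀ hratnn hrat_exp N
    have h5 : (Real.exp (-(3*a)))^N = Real.exp ((N:ℝ) * (-(3*a))) := by
      rw [← Real.exp_nat_mul]
    have h6 : (N:ℝ) * (-(3*a)) ≤ 3*a - 3*(a^2/d) := by nlinarith
    calc P n₁ ≤ ((1/2 - a)/(1/2 + a))^N := h3
      _ ≤ (Real.exp (-(3*a)))^N := h4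
      _ = Real.exp ((N:ℝ) * (-(3*a))) := h5
      _ ≤ Real.exp (3*a - 3*(a^2/d)) := Real.exp_le_exp.2 h6
  set ρ := (1/2 - 2*a)/(1/2 + 2*a) with hρ
  have hρnn : 0 ≤ ρ := by rw [hρ]; apply div_nonneg <;> linarith
  have hρlt : ρ ≤ 1 - 4*a := by
    rw [hρ, div_le_iff₀ (by linarith)]
    nlinarith
  have hsum_geom : ∀ K : ℕ, ∑ i ∈ Finset.range K, ρ^i ≤ 1/(4*a) := by
    intro K
    have h1 : (∑ i ∈ Finset.range K, ρ^i) * (1 - ρ) = 1 - ρ^K := by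
      have := geom_sum_mul ρ K
      nlinarith [this]
    have h1ρ : 4*a ≤ 1 - ρ := by linarith
    have hpos : 0 < 1 - ρ := by linarith
    have h2 : (∑ i ∈ Finset.range K, ρ^i) ≤ 1/(1 - ρ) := by
      rw [le_div_iff₀ hpos, h1]
      have : (0:ℝ) ≤ ρ^K := pow_nonneg hρnn K
      linarith
    have h3 : 1/(1-ρ) ≤ 1/(4*a) := by
      apply one_div_le_one_div_of_le (by linarith) h1ρ
    linarith
  have hsub : S ⊆ Finset.Icc n₁ t := by
    intro n hn
    have h1 := (Finset.mem_filter.1 hn).1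
    rw [Finset.mem_Icc] at h1 ⊢
    exact ⟨S.min'_le n hn, h1.2⟩
  have hsum1 : ∑ n ∈ S, P n ≤ ∑ n ∈ Finset.Icc n₁ t, P n :=
    Finset.sum_le_sum_of_subset_of_nonneg hsub (fun n _ _ => hPnn n)
  have hsum2 : ∑ n ∈ Finset.Icc n₁ t, P n ≤ P n₁ * ∑ i ∈ Finset.range (t + 1 - n₁), ρ^i := by
    rw [← Finset.Ico_add_one_right_eq_Icc, Finset.sum_Ico_eq_sum_range, Finset.mul_sum]
    apply Finset.sum_le_sum
    intro i _
    exact claim (2*a) (by linarith) n₁ i (le_of_lt hn₁G)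
  have hfinal : ∑ n ∈ S, P n ≤ Real.exp (3*a - 3*(a^2/d)) * (1/(4*a)) := by
    have h1 : P n₁ * ∑ i ∈ Finset.range (t + 1 - n₁), ρ^i ≤ P n₁ * (1/(4*a)) :=
      mul_le_mul_of_nonneg_left (hsum_geom _) (hPnn n₁)
    have h2 : P n₁ * (1/(4*a)) ≤ Real.exp (3*a - 3*(a^2/d)) * (1/(4*a)) :=
      mul_le_mul_of_nonneg_right hPn₁ (by positivity)
    linarith
  calc ∑ n ∈ S, P n ≤ Real.exp (3*a - 3*(a^2/d)) * (1/(4*a)) := hfinal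
    _ = Real.exp (3*a - 3*(a^2/d)) / (4*a) := by ring

noncomputable def frugalPiR (F : ℤ → ℝ) (M : ℤ) : ℕ → ℝ
  | 0 => 1
  | n+1 => frugalPiR F M n * ((1 - F (M + n)) / F (M + n))

noncomputable def frugalPiL (F : ℤ → ℝ) (M : ℤ) : ℕ → ℝ
  | 0 => 1
  | n+1 => frugalPiL F M n * (F (M - n - 1) / (1 - F (M - n - 1)))

noncomputable def frugalPi (F : ℤ → ℝ) (M : ℤ) (x : ℤ) : ℝ :=
  if M ≤ x then frugalPiR F M (x - M).toNat else frugalPiL F M (M - x).toNat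

variable {F : ℤ → ℝ} {M : ℤ}

lemma frugalPiR_nonneg (h0 : ∀ x, 0 ≤ F x) (h1 : ∀ x, F x ≤ 1) (n : ℕ) :
    0 ≤ frugalPiR F M n := by
  induction n with
  | zero => norm_num [frugalPiR]
  | succ n ih =>
    rw [frugalPiR]
    apply mul_nonneg ih
    apply div_nonneg (by linarith [h1 (M + n)]) (h0 _)

lemma frugalPiL_nonneg (h0 : ∀ x, 0 ≤ F x) (h1 : ∀ x, F x ≤ 1) (n : ℕ) :
    0 ≤ frugalPiL F M n := by
  induction n with
  | zero => norm_num [frugalPiL]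
  | succ n ih =>
    rw [frugalPiL]
    apply mul_nonneg ih
    apply div_nonneg (h0 _) (by linarith [h1 (M - n - 1)])

lemma frugalPi_nonneg (h0 : ∀ x, 0 ≤ F x) (h1 : ∀ x, F x ≤ 1) (x : ℤ) :
    0 ≤ frugalPi F M x := by
  unfold frugalPi
  split
  · exact frugalPiR_nonneg h0 h1 _
  · exact frugalPiL_nonneg h0 h1 _

lemma frugalPi_self : frugalPi F M M = 1 := by
  simp [frugalPi, frugalPiR]

lemma frugalPi_right (n : ℕ) : frugalPi F M (M + n) = frugalPiR F M n := by
  have h : M ≤ M + (n:ℤ) := by omega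
  simp only [frugalPi, if_pos h]
  congr 1
  omega

lemma frugalPi_left (n : ℕ) : frugalPi F M (M - n) = frugalPiL F M n := by
  rcases Nat.eq_zero_or_pos n with h | h
  · subst h; simp [frugalPi, frugalPiR, frugalPiL]
  · have hlt : ¬ (M ≤ M - (n:ℤ)) := by omega
    simp only [frugalPi, if_neg hlt]
    congr 1
    omega

/-- Detailed balance: `π(x)·(1 - F x) = π(x+1)·F x`. -/
lemma frugalPi_db (hmono : Monotone F) (hmed : F M = 1/2) (h1 : ∀ x, F x ≤ 1) (x : ℤ) :
    frugalPi F M x * (1 - F x) = frugalPi F M (x+1) * F x := by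
  rcases le_or_gt M x with hMx | hxM
  · set n := (x - M).toNat with hn
    have hx : x = M + (n:ℤ) := by omega
    have hx1 : x + 1 = M + ((n+1 : ℕ):ℤ) := by omega
    have hFpos : 0 < F x := by
      have : F M ≤ F x := hmono hMx
      rw [hmed] at this; linarith
    rw [hx1, hx, frugalPi_right, frugalPi_right, frugalPiR]
    rw [← hx]
    field_simp
  · set n := (M - x - 1).toNat with hn
    have hx : x = M - ((n+1 : ℕ):ℤ) := by omega
    have hx1 : x + 1 = M - (n:ℤ) := by omega
    have hFlt : F x < 1 := by
      have : F x ≤ F M := hmono (by omega)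
      rw [hmed] at this; linarith
    rw [hx1, hx, frugalPi_left, frugalPi_left, frugalPiL]
    have e : M - ((n+1 : ℕ):ℤ) = M - (n:ℤ) - 1 := by push_cast; ring
    have hxx : M - ((n:ℤ)) - 1 = x := by omega
    rw [e, hxx]
    have hne : (1:ℝ) - F x ≠ 0 := by linarith
    field_simp

end Helpers

set_option maxHeartbeats 2000000 in
/-- If the Frugal-1U median process starts at the true median
(`m̃₀ = M` with `F(M) = 1/2`), then for every `t ≥ 1` and `ε ∈ (0,1)`,
`Pr[|F(m̃_t) − 1/2| > 2√(δ·ln(t/ε))] ≤ ε`. -/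
theorem frugal1U_median_stability
    {Ω : Type*} [MeasureSpace Ω] [IsProbabilityMeasure (ℙ : Measure Ω)]
    (μ : Measure ℤ) [IsProbabilityMeasure μ]
    (δ : ℝ) (hδ0 : 0 < δ) (hδ1 : δ < 1)
    (hmass : ∀ x : ℤ, (μ {x}).toReal ≤ δ)
    (F : ℤ → ℝ) (hF : ∀ x : ℤ, F x = (μ {y : ℤ | y ≤ x}).toReal)
    (s : ℕ → Ω → ℤ) (u : ℕ → Ω → ℝ)
    (hs_meas : ∀ t, Measurable (s t)) (hu_meas : ∀ t, Measurable (u t))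
    (hlaw : ∀ t : ℕ, Measure.map (fun ω => (s t ω, u t ω)) ℙ
      = μ.prod (volume.restrict (Set.Icc (0:ℝ) 1)))
    (hindep : iIndepFun
      (fun t ω => (s t ω, u t ω)) ℙ)
    (m : ℕ → Ω → ℤ)
    (M : ℤ) (hmedian : F M = 1/2)
    (hm0 : ∀ ω, m 0 ω = M)
    (hrec : ∀ t ω, m (t+1) ω =
      if m t ω < s (t+1) ω ∧ (1:ℝ)/2 < u (t+1) ω then m t ω + 1
      else if s (t+1) ω < m t ω ∧ (1:ℝ)/2 < u (t+1) ω then m t ω - 1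
      else m t ω)
    (t : ℕ) (ht : 1 ≤ t) (ε : ℝ) (hε0 : 0 < ε) (hε1 : ε < 1) :
    ℙ {ω | 2 * Real.sqrt (δ * Real.log (t / ε)) < |F (m t ω) - 1/2|}
      ≤ ENNReal.ofReal ε := by
  classical
  -- basic facts about F
  have hμIic : ∀ x : ℤ, μ (Set.Iic x) = ENNReal.ofReal (F x) := by
    intro x
    rw [show Set.Iic x = {y : ℤ | y ≤ x} from rfl, hF x]
    exact (ENNReal.ofReal_toReal (measure_ne_top μ _)).symm
  have hF0 : ∀ x : ℤ, 0 ≤ F x := fun x => by rw [hF x]; exact ENNReal.toReal_nonneg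
  have hF1 : ∀ x : ℤ, F x ≤ 1 := by
    intro x
    rw [hF x]
    have h := prob_le_one (μ := μ) (s := {y : ℤ | y ≤ x})
    have h2 := ENNReal.toReal_mono ENNReal.one_ne_top h
    simpa using h2
  have hFmono : Monotone F := by
    intro x y hxy
    rw [hF x, hF y]
    exact ENNReal.toReal_mono (measure_ne_top μ _)
      (measure_mono (fun z hz => le_trans hz hxy))
  have hμsingle : ∀ x : ℤ, μ {x} = ENNReal.ofReal (F x - F (x-1)) := by
    intro x
    have hdecomp : Set.Iic x = Set.Iic (x-1) ∪ {x} := by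
      ext z; simp only [Set.mem_Iic, Set.mem_union, Set.mem_singleton_iff]; omega
    have hdisj : Disjoint (Set.Iic (x-1)) ({x} : Set ℤ) := by
      simp only [Set.disjoint_singleton_right, Set.mem_Iic]; omega
    have hm : ENNReal.ofReal (F x) = ENNReal.ofReal (F (x-1)) + μ {x} := by
      rw [← hμIic, ← hμIic, hdecomp, measure_union hdisj .of_discrete]
    have h2 : μ {x} = ENNReal.ofReal (F x) - ENNReal.ofReal (F (x-1)) := by
      rw [hm, ENNReal.add_sub_cancel_left ENNReal.ofReal_ne_top]
    rw [h2, ← ENNReal.ofReal_sub _ (hF0 (x-1))]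
  have hstepnn : ∀ x : ℤ, 0 ≤ F x - F (x-1) := by
    intro x; have := hFmono (show x-1 ≤ x by omega); linarith
  have hmassR : ∀ x : ℤ, F x - F (x-1) ≤ δ := by
    intro x
    have h := hmass x
    rwa [hμsingle x, ENNReal.toReal_ofReal (hstepnn x)] at h
  have hμIoi : ∀ x : ℤ, μ (Set.Ioi x) = ENNReal.ofReal (1 - F x) := by
    intro x
    rw [← Set.compl_Iic, measure_compl .of_discrete (measure_ne_top μ _), hμIic,
      measure_univ, ← ENNReal.ofReal_one, ← ENNReal.ofReal_sub _ (hF0 x)]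
  have hμIio : ∀ x : ℤ, μ (Set.Iio x) = ENNReal.ofReal (F (x-1)) := by
    intro x
    have he : Set.Iio x = Set.Iic (x-1) := by
      ext z; simp only [Set.mem_Iio, Set.mem_Iic]; omega
    rw [he, hμIic]
  set ν := volume.restrict (Set.Icc (0:ℝ) 1) with hνdef
  have hνIoi : ν (Set.Ioi (1/2 : ℝ)) = ENNReal.ofReal (1/2) := by
    rw [hνdef, Measure.restrict_apply measurableSet_Ioi]
    have he : Set.Ioi (1/2:ℝ) ∩ Set.Icc 0 1 = Set.Ioc (1/2:ℝ) 1 := by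
      ext z
      simp only [Set.mem_inter_iff, Set.mem_Ioi, Set.mem_Icc, Set.mem_Ioc]
      constructor
      · rintro ⟨h1, _, h3⟩; exact ⟨h1, h3⟩
      · rintro ⟨h1, h2⟩; exact ⟨h1, by linarith, h2⟩
    rw [he, Real.volume_Ioc]
    norm_num
  have hνIic : ν (Set.Iic (1/2 : ℝ)) = ENNReal.ofReal (1/2) := by
    rw [hνdef, Measure.restrict_apply measurableSet_Iic]
    have he : Set.Iic (1/2:ℝ) ∩ Set.Icc 0 1 = Set.Icc (0:ℝ) (1/2) := by
      ext z
      simp only [Set.mem_inter_iff, Set.mem_Iic, Set.mem_Icc]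
      constructor
      · rintro ⟨h1, h2, _⟩; exact ⟨h2, h1⟩
      · rintro ⟨h1, h2⟩; exact ⟨h2, h1, by linarith⟩
    rw [he, Real.volume_Icc]
    norm_num
  -- the i.i.d. pairs
  set X : ℕ → Ω → ℤ × ℝ := fun i ω => (s i ω, u i ω) with hXdef
  have hXmeas : ∀ i, Measurable (X i) := fun i => (hs_meas i).prodMk (hu_meas i)
  have hXlaw : ∀ (i : ℕ) (B : Set (ℤ × ℝ)), MeasurableSet B →
      ℙ (X i ⁻¹' B) = (μ.prod ν) B := by
    intro i B hB
    rw [← Measure.map_apply (hXmeas i) hB, hXdef, hlaw i]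
  -- measurability of the one-step transition
  have hstep_meas : Measurable (fun p : ℤ × (ℤ × ℝ) =>
      if p.1 < p.2.1 ∧ (1:ℝ)/2 < p.2.2 then p.1 + 1
      else if p.2.1 < p.1 ∧ (1:ℝ)/2 < p.2.2 then p.1 - 1 else p.1) := by
    have hc : ∀ (c : Set (ℤ × ℤ)),
        MeasurableSet {p : ℤ × (ℤ × ℝ) | (p.1, p.2.1) ∈ c ∧ (1:ℝ)/2 < p.2.2} := by
      intro c
      have he : {p : ℤ × (ℤ × ℝ) | (p.1, p.2.1) ∈ c ∧ (1:ℝ)/2 < p.2.2}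
          = ((fun p : ℤ × (ℤ × ℝ) => (p.1, p.2.1)) ⁻¹' c) ∩
            ((fun p : ℤ × (ℤ × ℝ) => p.2.2) ⁻¹' Set.Ioi (1/2:ℝ)) := rfl
      rw [he]
      exact ((measurable_fst.prodMk measurable_snd.fst)
        ((Set.to_countable c).measurableSet)).inter (measurable_snd.snd measurableSet_Ioi)
    refine Measurable.ite (hc {q : ℤ × ℤ | q.1 < q.2}) ?_ ?_
    · exact (Measurable.of_discrete (f := fun a : ℤ => a + 1)).comp measurable_fst
    · refine Measurable.ite (hc {q : ℤ × ℤ | q.2 < q.1}) ?_ measurable_fst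
      exact (Measurable.of_discrete (f := fun a : ℤ => a - 1)).comp measurable_fst
  -- m T is a measurable function of the first T pairs
  have hfac : ∀ T : ℕ, ∃ g : ((Finset.Icc 1 T : Finset ℕ) → ℤ × ℝ) → ℤ,
      Measurable g ∧ ∀ ω, m T ω = g (fun i => X (i:ℕ) ω) := by
    intro T
    induction T with
    | zero => exact ⟨fun _ => M, measurable_const, fun ω => hm0 ω⟩
    | succ T ih =>
      obtain ⟨g, hgmeas, hgeq⟩ := ih
      have hmem : (T+1) ∈ Finset.Icc 1 (T+1) := by simp
      have hsub : ∀ i : (Finset.Icc 1 T : Finset ℕ), (i:ℕ) ∈ Finset.Icc 1 (T+1) := by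
        intro i
        have h2 := i.2
        simp only [Finset.mem_Icc] at h2 ⊢
        omega
      refine ⟨fun v =>
        (fun p : ℤ × (ℤ × ℝ) =>
          if p.1 < p.2.1 ∧ (1:ℝ)/2 < p.2.2 then p.1 + 1
          else if p.2.1 < p.1 ∧ (1:ℝ)/2 < p.2.2 then p.1 - 1 else p.1)
        (g (fun i => v ⟨(i:ℕ), hsub i⟩), v ⟨T+1, hmem⟩), ?_, ?_⟩
      · apply hstep_meas.comp
        apply Measurable.prodMk
        · exact hgmeas.comp (measurable_pi_lambda _ (fun i => measurable_pi_apply _))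
        · exact measurable_pi_apply _
      · intro ω
        rw [hrec T ω, hgeq ω]
  -- independence of m T from the (T+1)-st pair
  have hindepT : ∀ T : ℕ, IndepFun (m T) (X (T+1)) ℙ := by
    intro T
    obtain ⟨g, hgmeas, hgeq⟩ := hfac T
    have hdisj : Disjoint (Finset.Icc 1 T) ({T+1} : Finset ℕ) := by
      simp only [Finset.disjoint_singleton_right, Finset.mem_Icc]
      omega
    have h := hindep.indepFun_finset (Finset.Icc 1 T) {T+1} hdisj hXmeas
    have h2 := h.comp hgmeas
      (measurable_pi_apply (⟨T+1, Finset.mem_singleton_self (T+1)⟩ : ({T+1} : Finset ℕ)))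
    have e1 : g ∘ (fun ω (i : (Finset.Icc 1 T : Finset ℕ)) => X (i:ℕ) ω) = m T := by
      funext ω; exact (hgeq ω).symm
    rw [e1] at h2
    exact h2
  have hjoint : ∀ (T : ℕ) (y : ℤ) (B : Set (ℤ × ℝ)), MeasurableSet B →
      ℙ ({ω | m T ω = y} ∩ X (T+1) ⁻¹' B) = ℙ {ω | m T ω = y} * (μ.prod ν) B := by
    intro T y B hB
    have h := (hindepT T).measure_inter_preimage_eq_mul {y} B .of_discrete hB
    have e : m T ⁻¹' {y} = {ω | m T ω = y} := rfl
    rw [e] at h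
    rw [h, hXlaw (T+1) B hB]
  have hπnn : ∀ x, 0 ≤ frugalPi F M x := frugalPi_nonneg hF0 hF1
  have hkey : ∀ (T : ℕ) (x : ℤ), ℙ {ω | m T ω = x} ≤ ENNReal.ofReal (frugalPi F M x) := by
    intro T
    induction T with
    | zero =>
      intro x
      rcases eq_or_ne x M with h | h
      · subst h
        rw [frugalPi_self, ENNReal.ofReal_one]
        exact prob_le_one
      · have he : {ω | m 0 ω = x} = ∅ := by
          ext ω
          simp only [Set.mem_setOf_eq, Set.mem_empty_iff_false, iff_false]
          rw [hm0 ω]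
          exact fun hh => h hh.symm
        rw [he, measure_empty]
        exact zero_le
    | succ T ih =>
      intro x
      set A := {ω | m T ω = x - 1} ∩ X (T+1) ⁻¹' (Set.Ioi (x-1) ×ˢ Set.Ioi (1/2:ℝ)) with hA
      set B := {ω | m T ω = x + 1} ∩ X (T+1) ⁻¹' (Set.Iio (x+1) ×ˢ Set.Ioi (1/2:ℝ)) with hB
      set C := {ω | m T ω = x} ∩ X (T+1) ⁻¹'
        ((Set.univ ×ˢ Set.Iic (1/2:ℝ)) ∪ (({x} : Set ℤ) ×ˢ Set.Ioi (1/2:ℝ))) with hC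
      have hsubE : {ω | m (T+1) ω = x} ⊆ A ∪ B ∪ C := by
        intro ω hω
        simp only [Set.mem_setOf_eq] at hω
        rw [hrec T ω] at hω
        by_cases h1 : m T ω < s (T+1) ω ∧ (1:ℝ)/2 < u (T+1) ω
        · rw [if_pos h1] at hω
          left; left
          refine ⟨by simp only [Set.mem_setOf_eq]; omega, ?_⟩
          simp only [Set.mem_preimage, hXdef, Set.mem_prod, Set.mem_Ioi]
          exact ⟨by omega, h1.2⟩
        · rw [if_neg h1] at hω
          by_cases h2 : s (T+1) ω < m T ω ∧ (1:ℝ)/2 < u (T+1) ω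
          · rw [if_pos h2] at hω
            left; right
            refine ⟨by simp only [Set.mem_setOf_eq]; omega, ?_⟩
            simp only [Set.mem_preimage, hXdef, Set.mem_prod, Set.mem_Iio, Set.mem_Ioi]
            exact ⟨by omega, h2.2⟩
          · rw [if_neg h2] at hω
            right
            refine ⟨by simp only [Set.mem_setOf_eq]; exact hω, ?_⟩
            simp only [Set.mem_preimage, hXdef, Set.mem_union, Set.mem_prod, Set.mem_univ,
              Set.mem_Iic, Set.mem_singleton_iff, Set.mem_Ioi, true_and]
            by_cases h3 : (1:ℝ)/2 < u (T+1) ω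
            · right
              have hns : ¬ m T ω < s (T+1) ω := fun hlt => h1 ⟨hlt, h3⟩
              have hns2 : ¬ s (T+1) ω < m T ω := fun hlt => h2 ⟨hlt, h3⟩
              exact ⟨by omega, h3⟩
            · left; linarith [not_lt.1 h3]
      have hmA : ℙ A = ℙ {ω | m T ω = x-1} * ENNReal.ofReal ((1 - F (x-1)) * (1/2)) := by
        rw [hA, hjoint T (x-1) _ ((MeasurableSet.of_discrete).prod measurableSet_Ioi)]
        rw [Measure.prod_prod, hμIoi, hνIoi,
          ← ENNReal.ofReal_mul (by linarith [hF1 (x-1)])]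
      have hmB : ℙ B = ℙ {ω | m T ω = x+1} * ENNReal.ofReal (F x * (1/2)) := by
        rw [hB, hjoint T (x+1) _ ((MeasurableSet.of_discrete).prod measurableSet_Ioi)]
        rw [Measure.prod_prod, hμIio, hνIoi]
        have e : x + 1 - 1 = x := by ring
        rw [e, ← ENNReal.ofReal_mul (hF0 x)]
      have hmC : ℙ C ≤ ℙ {ω | m T ω = x} *
          ENNReal.ofReal (1/2 + (F x - F (x-1)) * (1/2)) := by
        rw [hC, hjoint T x _
          (((MeasurableSet.univ).prod measurableSet_Iic).union
            ((MeasurableSet.of_discrete).prod measurableSet_Ioi))]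
        refine mul_le_mul_right ?_ _
        refine (measure_union_le _ _).trans ?_
        rw [Measure.prod_prod, Measure.prod_prod, measure_univ, one_mul, hνIic, hνIoi,
          hμsingle x, ← ENNReal.ofReal_mul (hstepnn x),
          ← ENNReal.ofReal_add (by norm_num) (by nlinarith [hstepnn x])]
      have htot : ℙ {ω | m (T+1) ω = x} ≤ ℙ A + ℙ B + ℙ C :=
        (measure_mono hsubE).trans ((measure_union_le _ _).trans
          (add_le_add_left (measure_union_le _ _) _))
      have hbA : ℙ A ≤ ENNReal.ofReal (frugalPi F M (x-1) * ((1 - F (x-1)) * (1/2))) := by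
        rw [hmA, ENNReal.ofReal_mul (hπnn _)]
        exact mul_le_mul_left (ih (x-1)) _
      have hbB : ℙ B ≤ ENNReal.ofReal (frugalPi F M (x+1) * (F x * (1/2))) := by
        rw [hmB, ENNReal.ofReal_mul (hπnn _)]
        exact mul_le_mul_left (ih (x+1)) _
      have hbC : ℙ C ≤ ENNReal.ofReal (frugalPi F M x * (1/2 + (F x - F (x-1)) * (1/2))) := by
        refine hmC.trans ?_
        rw [ENNReal.ofReal_mul (hπnn _)]
        exact mul_le_mul_left (ih x) _
      have hid : frugalPi F M (x-1) * ((1 - F (x-1)) * (1/2))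
          + frugalPi F M (x+1) * (F x * (1/2))
          + frugalPi F M x * (1/2 + (F x - F (x-1)) * (1/2)) = frugalPi F M x := by
        have d1 := frugalPi_db hFmono hmedian hF1 (x-1)
        have d2 := frugalPi_db hFmono hmedian hF1 x
        have hx1 : x - 1 + 1 = x := by ring
        rw [hx1] at d1
        linear_combination (1/2) * d1 - (1/2) * d2
      calc ℙ {ω | m (T+1) ω = x} ≤ ℙ A + ℙ B + ℙ C := htot
        _ ≤ ENNReal.ofReal (frugalPi F M (x-1) * ((1 - F (x-1)) * (1/2)))
            + ENNReal.ofReal (frugalPi F M (x+1) * (F x * (1/2)))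
            + ENNReal.ofReal (frugalPi F M x * (1/2 + (F x - F (x-1)) * (1/2))) :=
          add_le_add (add_le_add hbA hbB) hbC
        _ = ENNReal.ofReal (frugalPi F M (x-1) * ((1 - F (x-1)) * (1/2))
            + frugalPi F M (x+1) * (F x * (1/2))
            + frugalPi F M x * (1/2 + (F x - F (x-1)) * (1/2))) := by
          have hnnA : 0 ≤ frugalPi F M (x-1) * ((1 - F (x-1)) * (1/2)) :=
            mul_nonneg (hπnn _) (by nlinarith [hF1 (x-1)])
          have hnnB : 0 ≤ frugalPi F M (x+1) * (F x * (1/2)) :=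
            mul_nonneg (hπnn _) (by nlinarith [hF0 x])
          have hnnC : 0 ≤ frugalPi F M x * (1/2 + (F x - F (x-1)) * (1/2)) :=
            mul_nonneg (hπnn _) (by nlinarith [hstepnn x])
          rw [← ENNReal.ofReal_add hnnA hnnB,
            ← ENNReal.ofReal_add (add_nonneg hnnA hnnB) hnnC]
        _ = ENNReal.ofReal (frugalPi F M x) := by rw [hid]
  -- range of the walk
  have hrange : ∀ (T : ℕ) (ω : Ω), M - (T:ℤ) ≤ m T ω ∧ m T ω ≤ M + (T:ℤ) := by
    intro T
    induction T with
    | zero => intro ω; rw [hm0 ω]; constructor <;> simp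
    | succ T ih =>
      intro ω
      have h := ih ω
      rw [hrec T ω]
      split_ifs <;> constructor <;> push_cast <;> omega
  -- setup of parameters
  set L := Real.log (t / ε) with hLdef
  set a := Real.sqrt (δ * L) with hadef
  have htR : (1:ℝ) ≤ (t:ℝ) := by exact_mod_cast ht
  have htε : 1 < (t:ℝ)/ε := by rw [lt_div_iff₀ hε0]; linarith
  have hL0 : 0 < L := Real.log_pos htε
  have ha0 : 0 < a := Real.sqrt_pos.2 (by positivity)
  have ha2 : a^2 = δ * L := Real.sq_sqrt (by positivity)
  by_cases hbig : (1:ℝ)/4 ≤ a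
  · have hemp : {ω | 2 * a < |F (m t ω) - 1/2|} = ∅ := by
      ext ω
      simp only [Set.mem_setOf_eq, Set.mem_empty_iff_false, iff_false, not_lt]
      have h1 := hF0 (m t ω); have h2 := hF1 (m t ω)
      rw [abs_le]
      constructor <;> linarith
    rw [hemp, measure_empty]
    exact zero_le
  push_neg at hbig
  by_cases heasy : t = 1 ∧ 1/2 ≤ ε
  · obtain ⟨ht1, hε2⟩ := heasy
    subst ht1
    have hsubu : {ω | 2 * a < |F (m 1 ω) - 1/2|}
        ⊆ X 1 ⁻¹' (Set.univ ×ˢ Set.Ioi (1/2:ℝ)) := by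
      intro ω hω
      simp only [Set.mem_setOf_eq] at hω
      simp only [Set.mem_preimage, hXdef, Set.mem_prod, Set.mem_univ, Set.mem_Ioi, true_and]
      by_contra hu
      push_neg at hu
      have hm1 : m 1 ω = M := by
        rw [hrec 0 ω, if_neg, if_neg]
        · exact hm0 ω
        · rintro ⟨_, hh⟩; linarith
        · rintro ⟨_, hh⟩; linarith
      rw [hm1, hmedian] at hω
      simp only [sub_self, abs_zero] at hω
      linarith
    refine le_trans (measure_mono hsubu) ?_
    rw [hXlaw 1 _ ((MeasurableSet.univ).prod measurableSet_Ioi), Measure.prod_prod,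
      measure_univ, one_mul, hνIoi]
    exact ENNReal.ofReal_le_ofReal (by linarith)
  -- main case : L ≥ log 2
  have hln2 : Real.log 2 ≤ L := by
    rw [hLdef]
    apply Real.log_le_log (by norm_num)
    rcases Nat.lt_or_ge t 2 with h2 | h2
    · have ht1 : t = 1 := by omega
      have hε2 : ε < 1/2 := by
        rcases not_and_or.1 heasy with h | h
        · exact absurd ht1 h
        · linarith [not_le.1 h]
      rw [ht1]
      push_cast
      rw [le_div_iff₀ hε0]
      linarith
    · have h2R : (2:ℝ) ≤ (t:ℝ) := by exact_mod_cast h2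
      rw [le_div_iff₀ hε0]
      nlinarith
  -- reduce to a finite sum of stationary weights
  set Bad := (Finset.Icc (M - (t:ℤ)) (M + (t:ℤ))).filter
    (fun x => 2*a < |F x - 1/2|) with hBad
  have hEsub : {ω | 2 * a < |F (m t ω) - 1/2|} ⊆ ⋃ x ∈ Bad, {ω | m t ω = x} := by
    intro ω hω
    simp only [Set.mem_setOf_eq] at hω
    have hmem : m t ω ∈ Bad := by
      rw [hBad, Finset.mem_filter, Finset.mem_Icc]
      exact ⟨⟨(hrange t ω).1, (hrange t ω).2⟩, hω⟩
    exact Set.mem_biUnion hmem rfl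
  have hPE : ℙ {ω | 2*a < |F (m t ω) - 1/2|}
      ≤ ENNReal.ofReal (∑ x ∈ Bad, frugalPi F M x) := by
    refine (measure_mono hEsub).trans ((measure_biUnion_finset_le Bad _).trans ?_)
    rw [ENNReal.ofReal_sum_of_nonneg (fun x _ => hπnn x)]
    exact Finset.sum_le_sum (fun x _ => hkey t x)
  -- split the sum into the two sides of M
  set Gr : ℕ → ℝ := fun n => F (M + (n:ℤ)) - 1/2 with hGrdef
  set Gl : ℕ → ℝ := fun n => 1/2 - F (M - (n:ℤ)) with hGldef
  set Nr := (Finset.Icc 1 t).filter (fun n => 2*a < Gr n) with hNrdef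
  set Nl := (Finset.Icc 1 t).filter (fun n => 2*a < Gl n) with hNldef
  have hπright : ∀ x : ℤ, M ≤ x → frugalPi F M x = frugalPiR F M (x - M).toNat := by
    intro x hx; simp only [frugalPi, if_pos hx]
  have hπleft : ∀ x : ℤ, ¬ M ≤ x → frugalPi F M x = frugalPiL F M (M - x).toNat := by
    intro x hx; simp only [frugalPi, if_neg hx]
  have hMne : ∀ x : ℤ, x ∈ Bad → x ≠ M := by
    intro x hx he
    rw [hBad, Finset.mem_filter] at hx
    rw [he, hmedian] at hx
    simp only [sub_self, abs_zero] at hx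
    linarith [hx.2]
  have hsplit : ∑ x ∈ Bad, frugalPi F M x
      = (∑ n ∈ Nr, frugalPiR F M n) + (∑ n ∈ Nl, frugalPiL F M n) := by
    rw [← Finset.sum_filter_add_sum_filter_not Bad (fun x => M < x)]
    congr 1
    · refine Finset.sum_nbij' (fun x => (x - M).toNat) (fun n => M + (n:ℤ))
        ?_ ?_ ?_ ?_ ?_
      · intro x hx
        rw [Finset.mem_filter] at hx
        obtain ⟨hx1, hx2⟩ := hx
        have hx2' : M < x := hx2
        rw [hBad, Finset.mem_filter, Finset.mem_Icc] at hx1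
        obtain ⟨⟨hxa, hxb⟩, hxc⟩ := hx1
        rw [hNrdef, Finset.mem_filter, Finset.mem_Icc]
        have he : M + (((x - M).toNat : ℕ) : ℤ) = x := by omega
        refine ⟨by omega, ?_⟩
        rw [hGrdef]
        simp only []
        rw [he]
        have hFx : (1:ℝ)/2 ≤ F x := by
          rw [← hmedian]; exact hFmono (le_of_lt hx2')
        rwa [abs_of_nonneg (by linarith)] at hxc
      · intro n hn
        rw [hNrdef, Finset.mem_filter, Finset.mem_Icc] at hn
        obtain ⟨⟨hn1, hn2⟩, hn3⟩ := hn
        rw [hGrdef] at hn3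
        simp only [] at hn3
        rw [Finset.mem_filter, hBad, Finset.mem_filter, Finset.mem_Icc]
        refine ⟨⟨by omega, ?_⟩, by omega⟩
        rw [abs_of_nonneg (by linarith)]
        exact hn3
      · intro x hx
        rw [Finset.mem_filter] at hx
        obtain ⟨_, hx2⟩ := hx
        omega
      · intro n hn
        rw [hNrdef, Finset.mem_filter, Finset.mem_Icc] at hn
        obtain ⟨⟨hn1, hn2⟩, _⟩ := hn
        omega
      · intro x hx
        rw [Finset.mem_filter] at hx
        exact hπright x (le_of_lt hx.2)
    · have hfe : Bad.filter (fun x => ¬ M < x) = Bad.filter (fun x => x < M) := by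
        apply Finset.filter_congr
        intro x hx
        have := hMne x hx
        constructor
        · intro h; omega
        · intro h; omega
      rw [hfe]
      refine Finset.sum_nbij' (fun x => (M - x).toNat) (fun n => M - (n:ℤ))
        ?_ ?_ ?_ ?_ ?_
      · intro x hx
        rw [Finset.mem_filter] at hx
        obtain ⟨hx1, hx2⟩ := hx
        have hx2' : x < M := hx2
        rw [hBad, Finset.mem_filter, Finset.mem_Icc] at hx1
        obtain ⟨⟨hxa, hxb⟩, hxc⟩ := hx1
        rw [hNldef, Finset.mem_filter, Finset.mem_Icc]
        have he : M - (((M - x).toNat : ℕ) : ℤ) = x := by omega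
        refine ⟨by omega, ?_⟩
        rw [hGldef]
        simp only []
        rw [he]
        have hFx : F x ≤ 1/2 := by
          rw [← hmedian]; exact hFmono (by omega)
        rwa [abs_of_nonpos (by linarith), neg_sub] at hxc
      · intro n hn
        rw [hNldef, Finset.mem_filter, Finset.mem_Icc] at hn
        obtain ⟨⟨hn1, hn2⟩, hn3⟩ := hn
        rw [hGldef] at hn3
        simp only [] at hn3
        rw [Finset.mem_filter, hBad, Finset.mem_filter, Finset.mem_Icc]
        refine ⟨⟨by omega, ?_⟩, by omega⟩
        rw [abs_of_nonpos (by linarith), neg_sub]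
        exact hn3
      · intro x hx
        rw [Finset.mem_filter] at hx
        obtain ⟨_, hx2⟩ := hx
        omega
      · intro n hn
        rw [hNldef, Finset.mem_filter, Finset.mem_Icc] at hn
        obtain ⟨⟨hn1, hn2⟩, _⟩ := hn
        omega
      · intro x hx
        rw [Finset.mem_filter] at hx
        refine hπleft x (by omega)
  -- apply the one-sided estimate
  have haL : a^2/δ = L := by rw [ha2]; field_simp
  have hOne : ∀ (G P : ℕ → ℝ), G 0 = 0 → Monotone G → (∀ n, G (n+1) ≤ G n + δ) →
      (∀ n, G n ≤ 1/2) → P 0 = 1 → (∀ n, 0 ≤ P n) →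
      (∀ n, P (n+1) ≤ P n * ((1/2 - G n)/(1/2 + G n))) →
      (∑ n ∈ (Finset.Icc 1 t).filter (fun n => 2*a < G n), P n = 0 ∨
        (a/δ < t ∧ ∑ n ∈ (Finset.Icc 1 t).filter (fun n => 2*a < G n), P n
          ≤ Real.exp (3*a - 3*L)/(4*a))) := by
    intro G P h1 h2 h3 h4 h5 h6 h7
    by_cases hne : ∃ n ∈ Finset.Icc 1 t, 2*a < G n
    · right
      have hres := frugal_oneSide G P a δ t ha0 hbig hδ0 h1 h2 h3 h4 h5 h6 h7 hne
      rwa [haL] at hres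
    · left
      have he : (Finset.Icc 1 t).filter (fun n => 2*a < G n) = ∅ := by
        rw [Finset.filter_eq_empty_iff]
        intro n hn
        exact fun hc => hne ⟨n, hn, hc⟩
      rw [he, Finset.sum_empty]
  -- hypotheses for the right side
  have hGr0 : Gr 0 = 0 := by
    rw [hGrdef]; simp only []; norm_num [hmedian]
  have hGrmono : Monotone Gr := by
    intro i j hij
    rw [hGrdef]
    simp only []
    have : F (M + (i:ℤ)) ≤ F (M + (j:ℤ)) := hFmono (by omega)
    linarith
  have hGrstep : ∀ n, Gr (n+1) ≤ Gr n + δ := by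
    intro n
    rw [hGrdef]
    simp only []
    have h := hmassR (M + (n:ℤ) + 1)
    have e : M + ((n+1 : ℕ):ℤ) = M + (n:ℤ) + 1 := by push_cast; ring
    rw [e]
    have e2 : M + (n:ℤ) + 1 - 1 = M + (n:ℤ) := by ring
    rw [e2] at h
    linarith
  have hGrhalf : ∀ n, Gr n ≤ 1/2 := by
    intro n; rw [hGrdef]; simp only []; linarith [hF1 (M + (n:ℤ))]
  have hPr0 : frugalPiR F M 0 = 1 := rfl
  have hPrnn : ∀ n, 0 ≤ frugalPiR F M n := frugalPiR_nonneg hF0 hF1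
  have hPrratio : ∀ n, frugalPiR F M (n+1)
      ≤ frugalPiR F M n * ((1/2 - Gr n)/(1/2 + Gr n)) := by
    intro n
    apply le_of_eq
    rw [frugalPiR]
    congr 1
    rw [hGrdef]
    simp only []
    congr 1 <;> ring
  -- hypotheses for the left side
  have hGl0 : Gl 0 = 0 := by
    rw [hGldef]; simp only []; norm_num [hmedian]
  have hGlmono : Monotone Gl := by
    intro i j hij
    rw [hGldef]
    simp only []
    have : F (M - (j:ℤ)) ≤ F (M - (i:ℤ)) := hFmono (by omega)
    linarith
  have hGlstep : ∀ n, Gl (n+1) ≤ Gl n + δ := by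
    intro n
    rw [hGldef]
    simp only []
    have h := hmassR (M - (n:ℤ))
    have e : M - ((n+1 : ℕ):ℤ) = M - (n:ℤ) - 1 := by push_cast; ring
    rw [e]
    linarith
  have hGlhalf : ∀ n, Gl n ≤ 1/2 := by
    intro n; rw [hGldef]; simp only []; linarith [hF0 (M - (n:ℤ))]
  have hGlnn : ∀ n, 0 ≤ Gl n := fun n => hGl0 ▸ hGlmono (Nat.zero_le n)
  have hPl0 : frugalPiL F M 0 = 1 := rfl
  have hPlnn : ∀ n, 0 ≤ frugalPiL F M n := frugalPiL_nonneg hF0 hF1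
  have hPlratio : ∀ n, frugalPiL F M (n+1)
      ≤ frugalPiL F M n * ((1/2 - Gl n)/(1/2 + Gl n)) := by
    intro n
    have he : frugalPiL F M (n+1)
        = frugalPiL F M n * ((1/2 - Gl (n+1))/(1/2 + Gl (n+1))) := by
      rw [frugalPiL]
      congr 1
      rw [hGldef]
      simp only []
      have e : M - ((n+1 : ℕ):ℤ) = M - (n:ℤ) - 1 := by push_cast; ring
      rw [e]
      congr 1 <;> ring
    rw [he]
    refine mul_le_mul_of_nonneg_left ?_ (hPlnn n)
    exact frugal_ratio_mono (hGlnn n) (hGlmono (Nat.le_succ n)) (hGlhalf (n+1))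
  have hRr := hOne Gr (frugalPiR F M) hGr0 hGrmono hGrstep hGrhalf hPr0 hPrnn hPrratio
  have hRl := hOne Gl (frugalPiL F M) hGl0 hGlmono hGlstep hGlhalf hPl0 hPlnn hPlratio
  -- final arithmetic
  have hfinal : a/δ < t →
      Real.exp (3*a - 3*L)/(4*a) + Real.exp (3*a - 3*L)/(4*a) ≤ ε := by
    intro hat
    have h2at : 2*L < 2*(a*(t:ℝ)) := by
      have hmul := mul_lt_mul_of_pos_left hat ha0
      have e : a*(a/δ) = L := by rw [← haL]; field_simp
      linarith
    have hexp1 : Real.exp (3*a - 2*L) ≤ 2*L := by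
      have e1 : Real.exp (3*a - 2*L) ≤ Real.exp (3*(1/4:ℝ) - 2*Real.log 2) := by
        apply Real.exp_le_exp.2
        linarith
      have e2 : Real.exp (3*(1/4:ℝ) - 2*Real.log 2) = Real.exp (3/4) / 4 := by
        rw [Real.exp_sub]
        congr 1
        · norm_num
        · rw [show (2:ℝ)*Real.log 2 = Real.log 2 + Real.log 2 by ring, Real.exp_add,
            Real.exp_log (by norm_num : (0:ℝ) < 2)]
          norm_num
      have e3 : Real.exp (3/4 : ℝ) ≤ 2.7182818286 := by
        calc Real.exp (3/4 : ℝ) ≤ Real.exp 1 := Real.exp_le_exp.2 (by norm_num)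
          _ ≤ 2.7182818286 := (Real.exp_one_lt_d9).le
      have e4 : (1.3862943606:ℝ) ≤ 2*L := by
        have := Real.log_two_gt_d9
        linarith
      calc Real.exp (3*a - 2*L) ≤ Real.exp (3/4) / 4 := e1.trans (le_of_eq e2)
        _ ≤ 2.7182818286/4 := by linarith
        _ ≤ 1.3862943606 := by norm_num
        _ ≤ 2*L := e4
    have hεeq : ε = t * Real.exp (-L) := by
      rw [hLdef, Real.exp_neg, Real.exp_log (by positivity)]
      field_simp
    have hkey2 : Real.exp (3*a - 3*L) ≤ ε * (2*a) := by
      rw [hεeq]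
      have e : Real.exp (3*a - 3*L) = Real.exp (3*a - 2*L) * Real.exp (-L) := by
        rw [← Real.exp_add]; ring_nf
      rw [e]
      calc Real.exp (3*a - 2*L) * Real.exp (-L) ≤ (2*L) * Real.exp (-L) :=
            mul_le_mul_of_nonneg_right hexp1 (Real.exp_nonneg _)
        _ ≤ (2*(a*(t:ℝ))) * Real.exp (-L) :=
            mul_le_mul_of_nonneg_right (by linarith) (Real.exp_nonneg _)
        _ = (t:ℝ) * Real.exp (-L) * (2*a) := by ring
    have he : Real.exp (3*a - 3*L)/(4*a) + Real.exp (3*a - 3*L)/(4*a)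
        = Real.exp (3*a - 3*L)/(2*a) := by
      field_simp
      ring
    rw [he, div_le_iff₀ (by linarith : (0:ℝ) < 2*a)]
    linarith
  have hbnn : 0 ≤ Real.exp (3*a - 3*L)/(4*a) := by positivity
  have hsumnn_r : 0 ≤ ∑ n ∈ Nr, frugalPiR F M n := Finset.sum_nonneg (fun n _ => hPrnn n)
  have hsumnn_l : 0 ≤ ∑ n ∈ Nl, frugalPiL F M n := Finset.sum_nonneg (fun n _ => hPlnn n)
  have htotal : ∑ x ∈ Bad, frugalPi F M x ≤ ε := by
    rw [hsplit]
    rcases hRr with hr | ⟨hatr, hbr⟩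
    · rcases hRl with hl | ⟨hatl, hbl⟩
      · rw [← hNrdef] at hr
        rw [← hNldef] at hl
        rw [hr, hl]
        linarith
      · rw [← hNrdef] at hr
        rw [← hNldef] at hbl
        rw [hr]
        have := hfinal hatl
        linarith
    · rcases hRl with hl | ⟨hatl, hbl⟩
      · rw [← hNrdef] at hbr
        rw [← hNldef] at hl
        rw [hl]
        have := hfinal hatr
        linarith
      · rw [← hNrdef] at hbr
        rw [← hNldef] at hbl
        have := hfinal hatr
        linarith
  exact hPE.trans (ENNReal.ofReal_le_ofReal htotal)
end

section
/- Let t ≥ 1, ε ∈ (0,1) with L = ln(t/ε) > 0, let 0 < δ < 1, set ω = 2·√(δ·L), and let T ≥ ω/δ. Then for every real j with 0 < j ≤ (4/ω²)·L, one has (ω·j + T)²/(4·j) ≥ T²·ω²/(16·L) ≥ ω⁴/(16·δ²·L) = L. In particular, exp(−(ω·j + T)²/(4·j)) ≤ ε/t for all such j. -/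
/-- With `L = ln(t/ε) > 0`, `0 < δ < 1`, `ω = 2·√(δ·L)` and
`T ≥ ω/δ`, for every real `j` with `0 < j ≤ (4/ω²)·L` one has
`(ω·j + T)²/(4·j) ≥ T²·ω²/(16·L) ≥ ω⁴/(16·δ²·L) = L`, and consequently
`exp(−(ω·j + T)²/(4·j)) ≤ ε/t`.  (Here `w` plays the role of `ω`.) -/
theorem small_j_tail_exponent_bound
    (t ε : ℝ) (ht : 1 ≤ t) (hε0 : 0 < ε) (hε1 : ε < 1)
    (hL : 0 < Real.log (t / ε))
    (δ : ℝ) (hδ0 : 0 < δ) (hδ1 : δ < 1)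
    (w : ℝ) (hw : w = 2 * Real.sqrt (δ * Real.log (t / ε)))
    (T : ℝ) (hT : w / δ ≤ T) :
    ∀ j : ℝ, 0 < j → j ≤ (4 / w ^ 2) * Real.log (t / ε) →
      T ^ 2 * w ^ 2 / (16 * Real.log (t / ε)) ≤ (w * j + T) ^ 2 / (4 * j) ∧
      w ^ 4 / (16 * δ ^ 2 * Real.log (t / ε))
        ≤ T ^ 2 * w ^ 2 / (16 * Real.log (t / ε)) ∧
      w ^ 4 / (16 * δ ^ 2 * Real.log (t / ε)) = Real.log (t / ε) ∧
      Real.exp (-((w * j + T) ^ 2 / (4 * j))) ≤ ε / t := by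
  intro j hj hjle
  set L := Real.log (t / ε) with hLdef
  have hδL : 0 < δ * L := mul_pos hδ0 hL
  have hsq : w ^ 2 = 4 * (δ * L) := by
    rw [hw, mul_pow, Real.sq_sqrt hδL.le]; ring
  have hwpos : 0 < w := by
    rw [hw]; positivity
  have hTpos : 0 < T := lt_of_lt_of_le (div_pos hwpos hδ0) hT
  have hδT : w ≤ δ * T := by
    rw [div_le_iff₀ hδ0] at hT; linarith [hT]
  have hjw : w ^ 2 * j ≤ 4 * L := by
    have h := mul_le_mul_of_nonneg_left hjle (sq_nonneg w)
    have hw2 : (0:ℝ) < w ^ 2 := by positivity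
    rw [← mul_assoc, mul_div_cancel₀ _ (ne_of_gt hw2)] at h
    linarith
  have h1 : T ^ 2 * w ^ 2 / (16 * L) ≤ (w * j + T) ^ 2 / (4 * j) := by
    rw [div_le_div_iff₀ (by positivity) (by positivity)]
    nlinarith [mul_pos hwpos hj, sq_nonneg (w * j), mul_pos hTpos (mul_pos hwpos hj),
      mul_le_mul_of_nonneg_left hjw (sq_nonneg T), sq_nonneg T]
  have h2 : w ^ 4 / (16 * δ ^ 2 * L) ≤ T ^ 2 * w ^ 2 / (16 * L) := by
    rw [div_le_div_iff₀ (by positivity) (by positivity)]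
    nlinarith [mul_le_mul hδT hδT hwpos.le (by positivity : (0:ℝ) ≤ δ * T),
      mul_pos hL (sq_nonneg w |>.lt_of_ne' (by positivity)), sq_nonneg w, hL]
  have h3 : w ^ 4 / (16 * δ ^ 2 * L) = L := by
    have : w ^ 4 = 16 * δ ^ 2 * L ^ 2 := by
      have : w ^ 4 = (w ^ 2) ^ 2 := by ring
      rw [this, hsq]; ring
    rw [this]; field_simp
  refine ⟨h1, h2, h3, ?_⟩
  have hexp : L ≤ (w * j + T) ^ 2 / (4 * j) := by
    calc L = w ^ 4 / (16 * δ ^ 2 * L) := h3.symm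
    _ ≤ T ^ 2 * w ^ 2 / (16 * L) := h2
    _ ≤ _ := h1
  have := Real.exp_le_exp.mpr (neg_le_neg hexp)
  refine this.trans ?_
  have htε : 0 < t / ε := div_pos (lt_of_lt_of_le one_pos ht) hε0
  rw [hLdef, Real.exp_neg, Real.exp_log htε]
  rw [inv_div]
end

section
/- Fix a quantile parameter q = h/k ∈ (0,1). Suppose the Frugal-1U quantile process with parameter q starts at the true q-quantile, i.e. m̃_0 = M with F(M) = q. Then for every t ≥ 1 and every ε ∈ (0,1), the probability that |F(m̃_t) − q| > 2·√(δ·ln(t/ε)) is at most ε. -/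
open MeasureTheory ProbabilityTheory

namespace FrugalAux
open Finset



lemma ratio_bound (q c : ℝ) (hq0 : 0 < q) (hq1 : q < 1) (hc : 0 ≤ c) (hc1 : q + c ≤ 1) :
    (1 - q - c) * q ≤ Real.exp (-(2*c)) * ((q + c) * (1 - q)) := by
  have hc1' : c ≤ 1 := by linarith
  have h1 : (1:ℝ) - c ≤ Real.exp (-c) := by
    have := Real.add_one_le_exp (-c); linarith
  have h2 : ((1:ℝ) - c)^2 ≤ Real.exp (-(2*c)) := by
    have h0 : (0:ℝ) ≤ 1 - c := by linarith
    have := mul_le_mul h1 h1 h0 (Real.exp_pos _).le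
    calc ((1:ℝ)-c)^2 = (1-c)*(1-c) := sq (1-c) ▸ by ring
      _ ≤ Real.exp (-c) * Real.exp (-c) := this
      _ = Real.exp (-(2*c)) := by rw [← Real.exp_add]; ring_nf
  have key : (1 - q - c) * q ≤ (1-c)^2 * ((q + c) * (1 - q)) := by
    have h1q : (0:ℝ) ≤ 1 - q := by linarith
    have h1c : (0:ℝ) ≤ 1 - c := by linarith
    have h1qc : (0:ℝ) ≤ 1 - q - c := by linarith
    nlinarith [mul_nonneg hc (sq_nonneg q),
      mul_nonneg (mul_nonneg (mul_nonneg hc h1q) h1c) h1qc]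
  have hnn : (0:ℝ) ≤ (q + c) * (1 - q) := by nlinarith
  calc (1 - q - c) * q ≤ (1-c)^2 * ((q + c) * (1 - q)) := key
    _ ≤ Real.exp (-(2*c)) * ((q + c) * (1 - q)) := mul_le_mul_of_nonneg_right h2 hnn

/-- Simple product sequence. -/
def prodSeq (r : ℕ → ℝ) : ℕ → ℝ
  | 0 => 1
  | (j+1) => prodSeq r j * r j

lemma prodSeq_nonneg (r : ℕ → ℝ) (hr : ∀ j, 0 ≤ r j) : ∀ j, 0 ≤ prodSeq r j := by
  intro j; induction j with
  | zero => norm_num [prodSeq]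
  | succ j ih => exact mul_nonneg ih (hr j)

lemma prodSeq_le_exp (r : ℕ → ℝ) (e : ℕ → ℝ) (hr : ∀ j, 0 ≤ r j)
    (hre : ∀ j, r j ≤ Real.exp (-(2 * e j))) :
    ∀ j, prodSeq r j ≤ Real.exp (-(2 * ∑ i ∈ range j, e i)) := by
  intro j; induction j with
  | zero => simp [prodSeq]
  | succ j ih =>
      have h1 : prodSeq r j * r j ≤ Real.exp (-(2 * ∑ i ∈ range j, e i)) * Real.exp (-(2 * e j)) :=
        mul_le_mul ih (hre j) (hr j) (Real.exp_pos _).le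
      calc prodSeq r (j+1) = prodSeq r j * r j := rfl
        _ ≤ _ := h1
        _ = Real.exp (-(2 * ∑ i ∈ range (j+1), e i)) := by
            rw [← Real.exp_add, Finset.sum_range_succ]; ring_nf



lemma sum_Icc_id_real (n : ℕ) : ∑ d ∈ Icc 1 n, (d:ℝ) = n*(n+1)/2 := by
  induction n with
  | zero => simp
  | succ n ih =>
      rw [Finset.sum_Icc_succ_top (by omega : 1 ≤ n+1), ih]
      push_cast; ring

set_option maxHeartbeats 2000000 in
lemma tail_sum (t : ℕ) (ht : 2 ≤ t) (ε δ : ℝ) (hε0 : 0 < ε) (hε1 : ε < 1)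
    (hδ0 : 0 < δ) (hδh : δ ≤ 1/2)
    (e : ℕ → ℝ) (he0 : e 0 = 0) (hmono : ∀ i, e i ≤ e (i+1))
    (hincr : ∀ i, e (i+1) ≤ e i + δ)
    (w : ℕ → ℝ) (hw0 : ∀ j, 0 ≤ w j)
    (hwb : ∀ j, w j ≤ Real.exp (-(2 * ∑ i ∈ range j, e i))) :
    ∑ j ∈ Icc 1 t, (if 2*Real.sqrt (δ * Real.log (t/ε)) < e j then w j else 0) ≤ ε/2 := by
  classical
  have ht2 : (2:ℝ) ≤ (t:ℝ) := by exact_mod_cast ht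
  have htpos : (0:ℝ) < t := by linarith
  set L : ℝ := Real.log (t/ε) with hLdef
  set a : ℝ := 2*Real.sqrt (δ * L) with hadef
  have htε : (2:ℝ) ≤ t/ε := by
    rw [le_div_iff₀ hε0]; nlinarith
  have hL2 : Real.log 2 ≤ L := Real.log_le_log (by norm_num) htε
  have hlog2_gt : (0.6931471803:ℝ) < Real.log 2 := Real.log_two_gt_d9
  have hlog2_lt : Real.log 2 < 0.6931471808 := Real.log_two_lt_d9
  have hL0 : 0 < L := by nlinarith
  have ha2 : a^2 = 4*(δ*L) := by
    rw [hadef, mul_pow, Real.sq_sqrt (by positivity)]; ring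
  have ha0 : 0 < a := by
    rw [hadef]; positivity
  have haL : a^2 ≤ 2*L := by nlinarith
  have hεt : Real.exp (-L) * t = ε := by
    rw [hLdef, ← Real.log_inv, Real.exp_log (by positivity)]
    field_simp
  clear_value L a
  -- monotone facts
  have hmono' : Monotone e := monotone_nat_of_le_succ hmono
  have he_nonneg : ∀ j, 0 ≤ e j := fun j => he0 ▸ hmono' (Nat.zero_le j)
  have hadd : ∀ i d, e (i + d) ≤ e i + d * δ := by
    intro i d; induction d with
    | zero => simp
    | succ d ih =>
        push_cast
        calc e (i + (d+1)) = e ((i+d) + 1) := by ring_nf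
          _ ≤ e (i+d) + δ := hincr (i+d)
          _ ≤ e i + d * δ + δ := by linarith
          _ = e i + ((d:ℝ)+1) * δ := by ring
  have hejδ : ∀ j, e j ≤ j * δ := by
    intro j
    have := hadd 0 j
    simpa [he0] using this
  by_cases hex : ∃ j, j ∈ Icc 1 t ∧ a < e j
  · -- main case
    set j₀ := Nat.find hex with hj₀def
    obtain ⟨hj₀mem, hj₀a⟩ := Nat.find_spec hex
    have hmin : ∀ j, j ∈ Icc 1 t ∧ a < e j → j₀ ≤ j := fun j hj => Nat.find_min' hex hj
    rw [← hj₀def] at hj₀mem hj₀a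
    clear_value j₀
    clear hj₀def hex
    have hj₀1 : 1 ≤ j₀ := (mem_Icc.1 hj₀mem).1
    have hj₀t : j₀ ≤ t := (mem_Icc.1 hj₀mem).2
    set T : ℝ := ∑ i ∈ range j₀, e i with hTdef
    set n : ℕ := Nat.floor (a/δ) with hndef
    have hn1 : (n:ℝ) * δ ≤ a := by
      have h := Nat.floor_le (a := a/δ) (by positivity)
      calc (n:ℝ) * δ ≤ (a/δ) * δ := mul_le_mul_of_nonneg_right h hδ0.le
        _ = a := by field_simp
    have hn2 : a < ((n:ℝ)+1) * δ := by
      have h := Nat.lt_floor_add_one (a/δ)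
      calc a = (a/δ) * δ := by field_simp
        _ < ((n:ℝ)+1) * δ := by
            apply mul_lt_mul_of_pos_right _ hδ0
            exact_mod_cast h
    clear_value n
    clear hndef
    have hnj₀ : n < j₀ := by
      have h1 : a < (j₀:ℝ) * δ := lt_of_lt_of_le hj₀a (hejδ j₀)
      have : (n:ℝ) < (j₀:ℝ) := by nlinarith
      exact_mod_cast this
    -- lower bound on T
    have hTlb : (n:ℝ)*a - δ*((n:ℝ)*((n:ℝ)+1)/2) ≤ T := by
      have hterm : ∀ d ∈ Icc 1 n, a - (d:ℝ)*δ ≤ e (j₀ - d) := by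
        intro d hd
        obtain ⟨hd1, hdn⟩ := mem_Icc.1 hd
        have hdj₀ : d ≤ j₀ := le_trans hdn hnj₀.le
        have h := hadd (j₀ - d) d
        rw [Nat.sub_add_cancel hdj₀] at h
        linarith
      have h1 : ∑ d ∈ Icc 1 n, (a - (d:ℝ)*δ) ≤ ∑ d ∈ Icc 1 n, e (j₀ - d) :=
        Finset.sum_le_sum hterm
      have h2 : ∑ d ∈ Icc 1 n, e (j₀ - d) = ∑ i ∈ (Icc 1 n).image (fun d => j₀ - d), e i := by
        rw [Finset.sum_image]
        intro x hx y hy hxy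
        obtain ⟨hx1, hxn⟩ := mem_Icc.1 hx
        obtain ⟨hy1, hyn⟩ := mem_Icc.1 hy
        simp only at hxy
        omega
      have h3 : (Icc 1 n).image (fun d => j₀ - d) ⊆ range j₀ := by
        intro i hi
        obtain ⟨d, hd, rfl⟩ := Finset.mem_image.1 hi
        obtain ⟨hd1, hdn⟩ := mem_Icc.1 hd
        rw [mem_range]; omega
      have h4 : ∑ i ∈ (Icc 1 n).image (fun d => j₀ - d), e i ≤ T := by
        apply Finset.sum_le_sum_of_subset_of_nonneg h3
        intro i _ _; exact he_nonneg i
      have h5 : ∑ d ∈ Icc 1 n, (a - (d:ℝ)*δ) = (n:ℝ)*a - δ*((n:ℝ)*((n:ℝ)+1)/2) := by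
        rw [Finset.sum_sub_distrib, Finset.sum_const, Nat.card_Icc, Nat.add_sub_cancel,
          nsmul_eq_mul]
        have h6 : ∑ d ∈ Icc 1 n, (d:ℝ)*δ = (∑ d ∈ Icc 1 n, (d:ℝ))*δ := by
          rw [Finset.sum_mul]
        rw [h6, sum_Icc_id_real]
        ring
      linarith
    have hT4L : 4*L - a ≤ 2*T := by
      have key : 0 ≤ (a - (n:ℝ)*δ) * (((n:ℝ)+1)*δ - a) :=
        mul_nonneg (by linarith) (by linarith)
      have key2 : 0 ≤ 2*(n:ℝ)*a*δ + a*δ - a^2 - (n:ℝ)^2*δ^2 - (n:ℝ)*δ^2 := by nlinarith [key]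
      have h6' := mul_le_mul_of_nonneg_left hTlb (by positivity : (0:ℝ) ≤ 2*δ)
      have h7 : a^2 - a*δ ≤ 2*δ*T := by nlinarith [h6', key2]
      have h8 : δ*(4*L - a) ≤ δ*(2*T) := by nlinarith [h7, ha2]
      exact le_of_mul_le_mul_left h8 hδ0
    -- termwise bound
    set r : ℝ := Real.exp (-(2*a)) with hrdef
    have hr0 : 0 < r := Real.exp_pos _
    have hr1 : r < 1 := by
      rw [hrdef, Real.exp_lt_one_iff]; linarith
    have hterm : ∀ j ∈ Icc 1 t, (if a < e j then w j else 0) ≤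
        (if j₀ ≤ j then Real.exp (-(2*T)) * r^(j - j₀) else 0) := by
      intro j hj
      by_cases hbad : a < e j
      · rw [if_pos hbad]
        have hjj₀ : j₀ ≤ j := hmin j ⟨hj, hbad⟩
        rw [if_pos hjj₀]
        have hcast : ((j - j₀ : ℕ) : ℝ) = (j:ℝ) - (j₀:ℝ) := Nat.cast_sub hjj₀
        have hsum : T + ((j:ℝ) - (j₀:ℝ)) * a ≤ ∑ i ∈ range j, e i := by
          have hsplit : ∑ i ∈ range j₀, e i + ∑ i ∈ Ico j₀ j, e i = ∑ i ∈ range j, e i := by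
            simp only [Finset.range_eq_Ico]
            exact Finset.sum_Ico_consecutive _ (Nat.zero_le _) hjj₀
          have hlow : ((j:ℝ) - (j₀:ℝ)) * a ≤ ∑ i ∈ Ico j₀ j, e i := by
            have hall : ∀ i ∈ Ico j₀ j, a ≤ e i := by
              intro i hi
              obtain ⟨hi1, _⟩ := mem_Ico.1 hi
              exact le_trans hj₀a.le (hmono' hi1)
            calc ((j:ℝ) - (j₀:ℝ)) * a = ((Ico j₀ j).card : ℝ) * a := by
                  rw [Nat.card_Ico, Nat.cast_sub hjj₀]
              _ = ∑ _i ∈ Ico j₀ j, a := by rw [Finset.sum_const, nsmul_eq_mul]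
              _ ≤ ∑ i ∈ Ico j₀ j, e i := Finset.sum_le_sum hall
          linarith
        calc w j ≤ Real.exp (-(2 * ∑ i ∈ range j, e i)) := hwb j
          _ ≤ Real.exp (-(2*T) + ((j - j₀ : ℕ):ℝ) * (-(2*a))) := by
              apply Real.exp_le_exp.2
              rw [hcast]; nlinarith [hsum]
          _ = Real.exp (-(2*T)) * r^(j - j₀) := by
              rw [Real.exp_add, hrdef, ← Real.exp_nat_mul]
      · rw [if_neg hbad]
        by_cases hj₀j : j₀ ≤ j
        · rw [if_pos hj₀j]; positivity
        · rw [if_neg hj₀j]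
    have hsum1 : ∑ j ∈ Icc 1 t, (if a < e j then w j else 0) ≤
        ∑ j ∈ Icc 1 t, (if j₀ ≤ j then Real.exp (-(2*T)) * r^(j - j₀) else 0) :=
      Finset.sum_le_sum hterm
    have hsum2 : ∑ j ∈ Icc 1 t, (if j₀ ≤ j then Real.exp (-(2*T)) * r^(j - j₀) else 0)
        = ∑ j ∈ Icc j₀ t, Real.exp (-(2*T)) * r^(j - j₀) := by
      rw [← Finset.sum_filter]
      congr 1
      ext j
      simp only [mem_filter, mem_Icc]
      omega
    have hsum3 : ∑ j ∈ Icc j₀ t, Real.exp (-(2*T)) * r^(j - j₀)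
        ≤ Real.exp (-(2*T)) * (1/(1-r)) := by
      rw [← Finset.mul_sum]
      apply mul_le_mul_of_nonneg_left _ (Real.exp_pos _).le
      have hre : ∑ j ∈ Icc j₀ t, r^(j - j₀) = ∑ k ∈ range (t - j₀ + 1), r^k := by
        apply Finset.sum_nbij' (fun j => j - j₀) (fun k => k + j₀)
        · intro j hj; rw [mem_range]; rw [mem_Icc] at hj; omega
        · intro k hk; rw [mem_Icc]; rw [mem_range] at hk; omega
        · intro j hj; rw [mem_Icc] at hj; omega
        · intro k _; omega
        · intro j _; rfl
      rw [hre]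
      have hgs := geom_sum_mul r (t - j₀ + 1)
      have hrpow : (0:ℝ) ≤ r^(t - j₀ + 1) := by positivity
      rw [le_div_iff₀ (by linarith : (0:ℝ) < 1 - r)]
      nlinarith [hgs, hrpow]
    -- final numeric bound
    have hfinal : Real.exp (-(2*T)) * (1/(1-r)) ≤ ε/2 := by
      have hexpT : Real.exp (-(2*T)) ≤ Real.exp (a - 4*L) := by
        apply Real.exp_le_exp.2; linarith
      by_cases hca : (1/2 : ℝ) ≤ a
      · -- big a case
        have hrhalf : r ≤ 1/2 := by
          have h1 : Real.exp (-(2*a)) ≤ Real.exp (-1) := by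
            apply Real.exp_le_exp.2; linarith
          have h2 : Real.exp (-1) ≤ 1/2 := by
            rw [Real.exp_neg]
            have h2e : (2:ℝ) ≤ Real.exp 1 := by
              have := Real.add_one_le_exp 1; linarith
            have := inv_anti₀ (by norm_num : (0:ℝ) < 2) h2e
            simpa using this
          rw [hrdef]; linarith
        have h3 : Real.exp (-(2*T)) * (1/(1-r)) ≤ Real.exp (a - 4*L) * 2 := by
          have h1r : (0:ℝ) < 1 - r := by linarith
          apply mul_le_mul hexpT _ (by positivity) (Real.exp_pos _).le
          rw [div_le_iff₀ (by linarith : (0:ℝ) < 1 - r)]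
          linarith
        have ha3L : a ≤ 3*L - Real.log 2 := by
          have hx0 : 0 ≤ 3*L - Real.log 2 := by nlinarith
          have hxsq : 2*L ≤ (3*L - Real.log 2)^2 := by nlinarith
          nlinarith
        have h4 : Real.exp (a - 4*L) * 2 ≤ Real.exp (-L) := by
          have h5 : Real.exp (a - 4*L) ≤ Real.exp (-L - Real.log 2) := by
            apply Real.exp_le_exp.2; linarith
          have h6 : Real.exp (-L - Real.log 2) = Real.exp (-L) / 2 := by
            rw [Real.exp_sub, Real.exp_log (by norm_num : (0:ℝ) < 2)]
          nlinarith [Real.exp_pos (-L)]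
        have h6 : Real.exp (-L) ≤ ε/2 := by
          rw [← hεt]; nlinarith [Real.exp_pos (-L)]
        linarith
      · -- small a case
        push_neg at hca
        have hra : a ≤ 1 - r := by
          have h1 : (1:ℝ) + 2*a ≤ Real.exp (2*a) := by
            have := Real.add_one_le_exp (2*a); linarith
          have h2 : r ≤ 1/(1+2*a) := by
            rw [hrdef, Real.exp_neg]
            have := inv_anti₀ (by linarith : (0:ℝ) < 1+2*a) h1
            simpa [one_div] using this
          have h3 : 1/(1+2*a) ≤ 1 - a := by
            rw [div_le_iff₀ (by linarith : (0:ℝ) < 1+2*a)]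
            nlinarith
          linarith
        have hta : 4*L < a * t := by
          have h1 : a < (t:ℝ) * δ := by
            calc a < e j₀ := hj₀a
              _ ≤ (j₀:ℝ) * δ := hejδ j₀
              _ ≤ (t:ℝ) * δ := by
                  apply mul_le_mul_of_nonneg_right _ hδ0.le
                  exact_mod_cast hj₀t
          nlinarith
        have h3 : Real.exp (-(2*T)) * (1/(1-r)) ≤ Real.exp (a - 4*L) * (1/a) := by
          have h1r : (0:ℝ) < 1 - r := by linarith
          apply mul_le_mul hexpT _ (by positivity) (Real.exp_pos _).le
          apply one_div_le_one_div_of_le ha0 hra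
        have h4 : Real.exp (a - 4*L) * (1/a) ≤ ε/2 := by
          rw [mul_one_div, div_le_div_iff₀ ha0 (by norm_num : (0:ℝ) < 2)]
          have h5 : Real.exp (a - 3*L) ≤ 1 := by
            rw [Real.exp_le_one_iff]; nlinarith
          have h6 : Real.exp (a - 4*L) = Real.exp (a - 3*L) * Real.exp (-L) := by
            rw [← Real.exp_add]; ring_nf
          have h7 : Real.exp (a-4*L) * 2 ≤ 2 * Real.exp (-L) := by
            rw [h6]; nlinarith [Real.exp_pos (-L)]
          have h8 : 2 * Real.exp (-L) ≤ a * t * Real.exp (-L) := by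
            have h9 : (2:ℝ) ≤ a * t := by nlinarith
            nlinarith [Real.exp_pos (-L)]
          calc Real.exp (a - 4*L) * 2 ≤ 2 * Real.exp (-L) := h7
            _ ≤ a * t * Real.exp (-L) := h8
            _ = ε * a := by rw [← hεt]; ring
        linarith
    calc ∑ j ∈ Icc 1 t, (if a < e j then w j else 0) ≤ _ := hsum1
      _ = _ := hsum2
      _ ≤ _ := hsum3
      _ ≤ ε/2 := hfinal
  · -- no bad index
    push_neg at hex
    have hz : ∀ j ∈ Icc 1 t, (if a < e j then w j else 0) = 0 := by
      intro j hj
      rw [if_neg (not_lt.2 (hex j hj))]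
    rw [Finset.sum_congr rfl hz, Finset.sum_const_zero]
    positivity



lemma vol01_Ioi (c : ℝ) (hc0 : 0 ≤ c) (hc1 : c ≤ 1) :
    (volume.restrict (Set.Icc (0:ℝ) 1)) (Set.Ioi c) = ENNReal.ofReal (1 - c) := by
  rw [Measure.restrict_apply measurableSet_Ioi]
  have h : Set.Ioi c ∩ Set.Icc (0:ℝ) 1 = Set.Ioc c 1 := by
    ext x
    simp only [Set.mem_inter_iff, Set.mem_Ioi, Set.mem_Icc, Set.mem_Ioc]
    constructor
    · rintro ⟨h1, _, h3⟩; exact ⟨h1, h3⟩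
    · rintro ⟨h1, h2⟩; exact ⟨h1, by linarith, h2⟩
  rw [h, Real.volume_Ioc]

variable {Ω : Type*} [MeasureSpace Ω] [IsProbabilityMeasure (ℙ : Measure Ω)]
  (μ : Measure ℤ) [IsProbabilityMeasure μ]

lemma meas_Iic (F : ℤ → ℝ) (hF : ∀ x : ℤ, F x = (μ {y : ℤ | y ≤ x}).toReal) (x : ℤ) :
    μ (Set.Iic x) = ENNReal.ofReal (F x) := by
  rw [hF x]
  exact (ENNReal.ofReal_toReal (measure_ne_top μ _)).symm

lemma meas_Ioi (F : ℤ → ℝ) (hF : ∀ x : ℤ, F x = (μ {y : ℤ | y ≤ x}).toReal)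
    (hF1 : ∀ x, F x ≤ 1) (hF0 : ∀ x, 0 ≤ F x) (x : ℤ) :
    μ (Set.Ioi x) = ENNReal.ofReal (1 - F x) := by
  have h1 : Set.Ioi x = (Set.Iic x)ᶜ := (Set.compl_Iic).symm
  rw [h1, measure_compl measurableSet_Iic (measure_ne_top μ _), measure_univ,
    meas_Iic μ F hF x, ← ENNReal.ofReal_one, ← ENNReal.ofReal_sub _ (hF0 x)]

lemma meas_Iio (F : ℤ → ℝ) (hF : ∀ x : ℤ, F x = (μ {y : ℤ | y ≤ x}).toReal) (x : ℤ) :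
    μ (Set.Iio x) = ENNReal.ofReal (F (x-1)) := by
  have h1 : Set.Iio x = Set.Iic (x-1) := by
    ext y; simp only [Set.mem_Iio, Set.mem_Iic]; omega
  rw [h1, meas_Iic μ F hF]

variable (s : ℕ → Ω → ℤ) (u : ℕ → Ω → ℝ)
lemma up_event (q : ℝ) (hq0 : 0 < q) (hq1 : q < 1)
    (F : ℤ → ℝ) (hF : ∀ x : ℤ, F x = (μ {y : ℤ | y ≤ x}).toReal)
    (hF1 : ∀ x, F x ≤ 1) (hF0 : ∀ x, 0 ≤ F x)
    (hs_meas : ∀ t, Measurable (s t)) (hu_meas : ∀ t, Measurable (u t))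
    (hlaw : ∀ t : ℕ, Measure.map (fun ω => (s t ω, u t ω)) ℙ
      = μ.prod (volume.restrict (Set.Icc (0:ℝ) 1)))
    (n : ℕ) (x : ℤ) :
    ℙ ((fun ω => (s n ω, u n ω)) ⁻¹' (Set.Ioi x ×ˢ Set.Ioi (1-q)))
      = ENNReal.ofReal ((1 - F x) * q) := by
  rw [← Measure.map_apply ((hs_meas n).prodMk (hu_meas n))
    (measurableSet_Ioi.prod measurableSet_Ioi), hlaw n, Measure.prod_prod,
    meas_Ioi μ F hF hF1 hF0, vol01_Ioi (1-q) (by linarith) (by linarith),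
    ← ENNReal.ofReal_mul (by linarith [hF1 x])]
  norm_num

lemma down_event (q : ℝ) (hq0 : 0 < q) (hq1 : q < 1)
    (F : ℤ → ℝ) (hF : ∀ x : ℤ, F x = (μ {y : ℤ | y ≤ x}).toReal)
    (hF0 : ∀ x, 0 ≤ F x)
    (hs_meas : ∀ t, Measurable (s t)) (hu_meas : ∀ t, Measurable (u t))
    (hlaw : ∀ t : ℕ, Measure.map (fun ω => (s t ω, u t ω)) ℙ
      = μ.prod (volume.restrict (Set.Icc (0:ℝ) 1)))
    (n : ℕ) (x : ℤ) :
    ℙ ((fun ω => (s n ω, u n ω)) ⁻¹' (Set.Iio x ×ˢ Set.Ioi q))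
      = ENNReal.ofReal (F (x-1) * (1-q)) := by
  rw [← Measure.map_apply ((hs_meas n).prodMk (hu_meas n))
    (measurableSet_Iio.prod measurableSet_Ioi), hlaw n, Measure.prod_prod,
    meas_Iio μ F hF, vol01_Ioi q (by linarith) (by linarith),
    ← ENNReal.ofReal_mul (hF0 _)]

set_option maxHeartbeats 1000000 in
lemma law_bound
    {Ω : Type*} [MeasureSpace Ω] [IsProbabilityMeasure (ℙ : Measure Ω)]
    (μ : Measure ℤ) [IsProbabilityMeasure μ]
    (q : ℝ) (hq0 : 0 < q) (hq1 : q < 1)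
    (F : ℤ → ℝ) (hF : ∀ x : ℤ, F x = (μ {y : ℤ | y ≤ x}).toReal)
    (hF1 : ∀ x, F x ≤ 1) (hF0 : ∀ x, 0 ≤ F x)
    (s : ℕ → Ω → ℤ) (u : ℕ → Ω → ℝ)
    (hs_meas : ∀ t, Measurable (s t)) (hu_meas : ∀ t, Measurable (u t))
    (hlaw : ∀ t : ℕ, Measure.map (fun ω => (s t ω, u t ω)) ℙ
      = μ.prod (volume.restrict (Set.Icc (0:ℝ) 1)))
    (hindep : iIndepFun (fun t ω => (s t ω, u t ω)) ℙ)
    (m : ℕ → Ω → ℤ) (M : ℤ)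
    (hm0 : ∀ ω, m 0 ω = M)
    (hrec : ∀ t ω, m (t+1) ω =
      if m t ω < s (t+1) ω ∧ 1 - q < u (t+1) ω then m t ω + 1
      else if s (t+1) ω < m t ω ∧ q < u (t+1) ω then m t ω - 1
      else m t ω)
    (nu : ℤ → ℝ) (hnu0 : ∀ x, 0 ≤ nu x) (hnuM : 1 ≤ nu M)
    (hDB : ∀ x, nu (x+1) * (F x * (1-q)) = nu x * ((1 - F x) * q)) :
    ∀ n y, ℙ {ω | m n ω = y} ≤ ENNReal.ofReal (nu y) := by
  have hXmeas : ∀ i, Measurable (fun ω => (s i ω, u i ω)) :=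
    fun i => (hs_meas i).prodMk (hu_meas i)
  -- σ-algebras
  set G : ℕ → MeasurableSpace Ω :=
    fun n => ⨆ i ∈ Set.Iic n,
      MeasurableSpace.comap (fun ω => (s i ω, u i ω)) inferInstance with hGdef
  have hm_meas : ∀ n, Measurable[G n] (m n) := by
    intro n; induction n with
    | zero =>
        have h0 : m 0 = fun _ => M := funext hm0
        rw [h0]; exact measurable_const
    | succ n ih =>
        have hle : G n ≤ G (n+1) := by
          apply biSup_mono
          intro i hi
          simp only [Set.mem_Iic] at *
          omega
        have hmn : Measurable[G (n+1)] (m n) := ih.mono hle le_rfl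
        have hXn : Measurable[G (n+1)] (fun ω => (s (n+1) ω, u (n+1) ω)) := by
          have h1 : MeasurableSpace.comap (fun ω => (s (n+1) ω, u (n+1) ω)) inferInstance
              ≤ ⨆ i ∈ Set.Iic (n+1),
                MeasurableSpace.comap (fun ω => (s i ω, u i ω)) inferInstance :=
            le_biSup (fun i => MeasurableSpace.comap (fun ω => (s i ω, u i ω)) inferInstance)
              (by simp : (n+1) ∈ Set.Iic (n+1))
          exact (measurable_iff_comap_le.2 le_rfl).mono h1 le_rfl
        have hsn : Measurable[G (n+1)] (s (n+1)) := measurable_fst.comp hXn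
        have hun : Measurable[G (n+1)] (u (n+1)) := measurable_snd.comp hXn
        have hrw : m (n+1) = fun ω =>
            if m n ω < s (n+1) ω ∧ 1 - q < u (n+1) ω then m n ω + 1
            else if s (n+1) ω < m n ω ∧ q < u (n+1) ω then m n ω - 1
            else m n ω := funext (hrec n)
        rw [hrw]
        have hset1 : MeasurableSet[G (n+1)] {ω | m n ω < s (n+1) ω ∧ 1 - q < u (n+1) ω} := by
          have hA := measurableSet_lt hmn hsn
          have hB : MeasurableSet[G (n+1)] {ω | 1 - q < u (n+1) ω} := hun measurableSet_Ioi
          exact hA.inter hB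
        have hset2 : MeasurableSet[G (n+1)] {ω | s (n+1) ω < m n ω ∧ q < u (n+1) ω} := by
          have hA := measurableSet_lt hsn hmn
          have hB : MeasurableSet[G (n+1)] {ω | q < u (n+1) ω} := hun measurableSet_Ioi
          exact hA.inter hB
        exact Measurable.ite hset1 (hmn.add measurable_const)
          (Measurable.ite hset2 (hmn.sub measurable_const) hmn)
  have hindep' : ∀ n, Indep (G n)
      (MeasurableSpace.comap (fun ω => (s (n+1) ω, u (n+1) ω)) inferInstance) ℙ := by
    intro n
    have h_le : ∀ i, MeasurableSpace.comap (fun ω => (s i ω, u i ω)) inferInstance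
        ≤ (inferInstance : MeasurableSpace Ω) := fun i => (hXmeas i).comap_le
    have h2 := indep_iSup_of_disjoint h_le hindep
      (S := Set.Iic n) (T := {n+1}) (by
        rw [Set.disjoint_left]; intro i hi hmem
        simp only [Set.mem_Iic] at hi
        simp only [Set.mem_singleton_iff] at hmem
        omega)
    have h3 : (⨆ i ∈ ({n+1} : Set ℕ),
        MeasurableSpace.comap (fun ω => (s i ω, u i ω)) inferInstance)
        = MeasurableSpace.comap (fun ω => (s (n+1) ω, u (n+1) ω)) inferInstance := by
      simp
    rwa [h3] at h2
  have hprod : ∀ n (x : ℤ) (B : Set (ℤ×ℝ)), MeasurableSet B →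
      ℙ ((m n)⁻¹' {x} ∩ (fun ω => (s (n+1) ω, u (n+1) ω))⁻¹' B)
        = ℙ ((m n)⁻¹' {x}) * ℙ ((fun ω => (s (n+1) ω, u (n+1) ω))⁻¹' B) := by
    intro n x B hB
    have h1 : MeasurableSet[G n] ((m n)⁻¹' {x}) := hm_meas n (MeasurableSet.singleton x)
    exact (Indep_iff _ _ _).1 (hindep' n) _ _ h1 ⟨B, hB, rfl⟩
  -- event probabilities
  have hup : ∀ n (x : ℤ),
      ℙ ((fun ω => (s n ω, u n ω)) ⁻¹' (Set.Ioi x ×ˢ Set.Ioi (1-q)))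
        = ENNReal.ofReal ((1 - F x) * q) := by
    intro n x
    have hIic : μ (Set.Iic x) = ENNReal.ofReal (F x) := by
      rw [hF x]; exact (ENNReal.ofReal_toReal (measure_ne_top μ _)).symm
    have hIoi : μ (Set.Ioi x) = ENNReal.ofReal (1 - F x) := by
      rw [(Set.compl_Iic).symm, measure_compl measurableSet_Iic (measure_ne_top μ _),
        measure_univ, hIic, ← ENNReal.ofReal_one, ← ENNReal.ofReal_sub _ (hF0 x)]
    rw [← Measure.map_apply ((hs_meas n).prodMk (hu_meas n))
      (measurableSet_Ioi.prod measurableSet_Ioi), hlaw n, Measure.prod_prod,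
      hIoi, vol01_Ioi (1-q) (by linarith) (by linarith),
      ← ENNReal.ofReal_mul (by linarith [hF1 x])]
    norm_num
  have hdown : ∀ n (x : ℤ),
      ℙ ((fun ω => (s n ω, u n ω)) ⁻¹' (Set.Iio x ×ˢ Set.Ioi q))
        = ENNReal.ofReal (F (x-1) * (1-q)) := by
    intro n x
    have hIic : μ (Set.Iic (x-1)) = ENNReal.ofReal (F (x-1)) := by
      rw [hF (x-1)]; exact (ENNReal.ofReal_toReal (measure_ne_top μ _)).symm
    have hIio : μ (Set.Iio x) = ENNReal.ofReal (F (x-1)) := by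
      have h1 : Set.Iio x = Set.Iic (x-1) := by
        ext y; simp only [Set.mem_Iio, Set.mem_Iic]; omega
      rw [h1, hIic]
    rw [← Measure.map_apply ((hs_meas n).prodMk (hu_meas n))
      (measurableSet_Iio.prod measurableSet_Ioi), hlaw n, Measure.prod_prod,
      hIio, vol01_Ioi q (by linarith) (by linarith),
      ← ENNReal.ofReal_mul (hF0 _)]
  have hstay : ∀ n (y : ℤ),
      ℙ ((fun ω => (s n ω, u n ω)) ⁻¹'
          ((Set.Ioi y ×ˢ Set.Ioi (1-q)) ∪ (Set.Iio y ×ˢ Set.Ioi q))ᶜ)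
        = ENNReal.ofReal (1 - ((1 - F y) * q + F (y-1) * (1-q))) := by
    intro n y
    have hBmeas : MeasurableSet ((Set.Ioi y ×ˢ Set.Ioi (1-q)) ∪ (Set.Iio y ×ˢ Set.Ioi q)) :=
      (measurableSet_Ioi.prod measurableSet_Ioi).union
        (measurableSet_Iio.prod measurableSet_Ioi)
    have hdisj : Disjoint ((Set.Ioi y ×ˢ Set.Ioi (1-q)) : Set (ℤ×ℝ)) (Set.Iio y ×ˢ Set.Ioi q) := by
      rw [Set.disjoint_left]
      rintro ⟨z, v⟩ h1 h2
      simp only [Set.mem_prod, Set.mem_Ioi, Set.mem_Iio] at h1 h2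
      omega
    have hU : ℙ ((fun ω => (s n ω, u n ω)) ⁻¹'
        ((Set.Ioi y ×ˢ Set.Ioi (1-q)) ∪ (Set.Iio y ×ˢ Set.Ioi q)))
        = ENNReal.ofReal ((1 - F y) * q + F (y-1) * (1-q)) := by
      rw [Set.preimage_union, measure_union (hdisj.preimage _)
        ((hXmeas n) (measurableSet_Iio.prod measurableSet_Ioi)),
        hup n y, hdown n y,
        ← ENNReal.ofReal_add (by nlinarith [hF1 y, hF0 y]) (by nlinarith [hF0 (y-1)])]
    have hcompl : ℙ ((fun ω => (s n ω, u n ω)) ⁻¹'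
        ((Set.Ioi y ×ˢ Set.Ioi (1-q)) ∪ (Set.Iio y ×ˢ Set.Ioi q))ᶜ)
        = 1 - ℙ ((fun ω => (s n ω, u n ω)) ⁻¹'
          ((Set.Ioi y ×ˢ Set.Ioi (1-q)) ∪ (Set.Iio y ×ˢ Set.Ioi q))) := by
      rw [Set.preimage_compl, measure_compl ((hXmeas n) hBmeas) (measure_ne_top _ _),
        measure_univ]
    rw [hcompl, hU, ← ENNReal.ofReal_one,
      ← ENNReal.ofReal_sub _ (by nlinarith [hF1 y, hF0 y, hF0 (y-1), hF1 (y-1)])]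
  -- the induction
  intro n
  induction n with
  | zero =>
      intro y
      by_cases hy : y = M
      · subst hy
        calc ℙ {ω | m 0 ω = y} ≤ 1 := prob_le_one
          _ ≤ ENNReal.ofReal (nu y) := by
              rw [ENNReal.one_le_ofReal]; exact hnuM
      · have hempty : {ω | m 0 ω = y} = ∅ := by
          ext ω; simp only [Set.mem_setOf_eq, Set.mem_empty_iff_false, iff_false]
          rw [hm0 ω]; exact fun h => hy h.symm
        rw [hempty, measure_empty]
        exact zero_le
  | succ n ih =>
      intro y
      set A : Set Ω := (m n)⁻¹' {y-1} ∩
        (fun ω => (s (n+1) ω, u (n+1) ω))⁻¹' (Set.Ioi (y-1) ×ˢ Set.Ioi (1-q)) with hAdef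
      set B : Set Ω := (m n)⁻¹' {y+1} ∩
        (fun ω => (s (n+1) ω, u (n+1) ω))⁻¹' (Set.Iio (y+1) ×ˢ Set.Ioi q) with hBdef
      set C : Set Ω := (m n)⁻¹' {y} ∩
        (fun ω => (s (n+1) ω, u (n+1) ω))⁻¹'
          ((Set.Ioi y ×ˢ Set.Ioi (1-q)) ∪ (Set.Iio y ×ˢ Set.Ioi q))ᶜ with hCdef
      have hsub : {ω | m (n+1) ω = y} ⊆ A ∪ (B ∪ C) := by
        intro ω hω
        simp only [Set.mem_setOf_eq] at hω
        have hr := hrec n ω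
        by_cases h1 : m n ω < s (n+1) ω ∧ 1 - q < u (n+1) ω
        · rw [if_pos h1] at hr
          left
          constructor
          · simp only [Set.mem_preimage, Set.mem_singleton_iff]; omega
          · simp only [Set.mem_preimage, Set.mem_prod, Set.mem_Ioi]
            exact ⟨by omega, h1.2⟩
        · rw [if_neg h1] at hr
          by_cases h2 : s (n+1) ω < m n ω ∧ q < u (n+1) ω
          · rw [if_pos h2] at hr
            right; left
            constructor
            · simp only [Set.mem_preimage, Set.mem_singleton_iff]; omega
            · simp only [Set.mem_preimage, Set.mem_prod, Set.mem_Iio, Set.mem_Ioi]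
              exact ⟨by omega, h2.2⟩
          · rw [if_neg h2] at hr
            right; right
            have hmy : m n ω = y := by omega
            constructor
            · simp only [Set.mem_preimage, Set.mem_singleton_iff]; exact hmy
            · simp only [Set.mem_preimage, Set.mem_compl_iff, Set.mem_union, Set.mem_prod,
                Set.mem_Ioi, Set.mem_Iio]
              push_neg
              push_neg at h1 h2
              rw [hmy] at h1 h2
              exact ⟨h1, h2⟩
      have hA : ℙ A ≤ ENNReal.ofReal (nu (y-1)) * ENNReal.ofReal ((1 - F (y-1)) * q) := by
        rw [hAdef, hprod n (y-1) _ (measurableSet_Ioi.prod measurableSet_Ioi), hup (n+1) (y-1)]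
        apply mul_le_mul_left
        exact ih (y-1)
      have hB : ℙ B ≤ ENNReal.ofReal (nu (y+1)) * ENNReal.ofReal (F y * (1-q)) := by
        rw [hBdef, hprod n (y+1) _ (measurableSet_Iio.prod measurableSet_Ioi), hdown (n+1) (y+1)]
        have : y + 1 - 1 = y := by omega
        rw [this]
        apply mul_le_mul_left
        exact ih (y+1)
      have hC : ℙ C ≤ ENNReal.ofReal (nu y) *
          ENNReal.ofReal (1 - ((1 - F y) * q + F (y-1) * (1-q))) := by
        rw [hCdef, hprod n y _ ((measurableSet_Ioi.prod measurableSet_Ioi).union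
          (measurableSet_Iio.prod measurableSet_Ioi)).compl, hstay (n+1) y]
        apply mul_le_mul_left
        exact ih y
      have hDB1 : nu (y-1) * ((1 - F (y-1)) * q) = nu y * (F (y-1) * (1-q)) := by
        have h := hDB (y-1)
        have hyy : y - 1 + 1 = y := by omega
        rw [hyy] at h
        linarith
      have hfin : ℙ {ω | m (n+1) ω = y} ≤ ℙ A + (ℙ B + ℙ C) := by
        calc ℙ {ω | m (n+1) ω = y} ≤ ℙ (A ∪ (B ∪ C)) := measure_mono hsub
          _ ≤ ℙ A + ℙ (B ∪ C) := measure_union_le _ _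
          _ ≤ ℙ A + (ℙ B + ℙ C) := add_le_add_right (measure_union_le _ _) _
      have hsum : ENNReal.ofReal (nu (y-1)) * ENNReal.ofReal ((1 - F (y-1)) * q)
          + (ENNReal.ofReal (nu (y+1)) * ENNReal.ofReal (F y * (1-q))
          + ENNReal.ofReal (nu y) * ENNReal.ofReal (1 - ((1 - F y) * q + F (y-1) * (1-q))))
          = ENNReal.ofReal (nu y) := by
        have e1 : (0:ℝ) ≤ (1 - F (y-1)) * q := by nlinarith [hF1 (y-1)]
        have e2 : (0:ℝ) ≤ F y * (1-q) := by nlinarith [hF0 y]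
        have e3 : (0:ℝ) ≤ 1 - ((1 - F y) * q + F (y-1) * (1-q)) := by
          nlinarith [hF1 y, hF0 y, hF0 (y-1), hF1 (y-1)]
        have hr1 : (0:ℝ) ≤ nu (y-1) * ((1 - F (y-1)) * q) := mul_nonneg (hnu0 _) e1
        have hr2 : (0:ℝ) ≤ nu (y+1) * (F y * (1-q)) := mul_nonneg (hnu0 _) e2
        have hr3 : (0:ℝ) ≤ nu y * (1 - ((1 - F y) * q + F (y-1) * (1-q))) :=
          mul_nonneg (hnu0 _) e3
        rw [← ENNReal.ofReal_mul (hnu0 (y-1)), ← ENNReal.ofReal_mul (hnu0 (y+1)),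
          ← ENNReal.ofReal_mul (hnu0 y),
          ← ENNReal.ofReal_add hr2 hr3, ← ENNReal.ofReal_add hr1 (add_nonneg hr2 hr3)]
        congr 1
        linear_combination hDB1 + hDB y
      calc ℙ {ω | m (n+1) ω = y} ≤ _ := hfin
        _ ≤ _ := add_le_add hA (add_le_add hB hC)
        _ = ENNReal.ofReal (nu y) := hsum

set_option maxHeartbeats 1000000 in
lemma nu_exists (q : ℝ) (hq0 : 0 < q) (hq1 : q < 1)
    (F : ℤ → ℝ) (hF0 : ∀ x, 0 ≤ F x) (hF1 : ∀ x, F x ≤ 1)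
    (hFmono : ∀ x y : ℤ, x ≤ y → F x ≤ F y)
    (M : ℤ) (hquantile : F M = q) :
    ∃ nu : ℤ → ℝ, (∀ x, 0 ≤ nu x) ∧ nu M = 1 ∧
      (∀ x, nu (x+1) * (F x * (1-q)) = nu x * ((1 - F x) * q)) ∧
      (∀ j : ℕ, nu (M + j) ≤ Real.exp (-(2 * ∑ i ∈ Finset.range j, (F (M + i) - q)))) ∧
      (∀ j : ℕ, nu (M - j) ≤ Real.exp (-(2 * ∑ i ∈ Finset.range j, (q - F (M - i))))) := by
  have hFq : ∀ x : ℤ, M ≤ x → q ≤ F x := fun x hx => hquantile ▸ hFmono M x hx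
  have hFq' : ∀ x : ℤ, x ≤ M → F x ≤ q := fun x hx => hquantile ▸ hFmono x M hx
  set rp : ℕ → ℝ := fun j => ((1 - F (M + j)) * q) / (F (M + j) * (1-q)) with hrpdef
  set rm : ℕ → ℝ := fun j => (F (M - j - 1) * (1-q)) / ((1 - F (M - j - 1)) * q) with hrmdef
  have hrp0 : ∀ j, 0 ≤ rp j := by
    intro j
    apply div_nonneg
    · have := hF1 (M + j); nlinarith
    · have := hF0 (M + j); nlinarith
  have hrm0 : ∀ j, 0 ≤ rm j := by
    intro j
    apply div_nonneg
    · have := hF0 (M - j - 1); nlinarith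
    · have := hF1 (M - j - 1); nlinarith
  have hrpden : ∀ j : ℕ, 0 < F (M + j) * (1-q) := by
    intro j
    have h1 : q ≤ F (M + j) := hFq _ (by omega)
    nlinarith
  have hrmden : ∀ j : ℕ, 0 < (1 - F (M - j - 1)) * q := by
    intro j
    have h1 : F (M - j - 1) ≤ q := hFq' _ (by omega)
    nlinarith
  set nu : ℤ → ℝ := fun x =>
    if M ≤ x then prodSeq rp (x - M).toNat else prodSeq rm (M - x).toNat with hnudef
  have hP0 : ∀ (r : ℕ → ℝ), (∀ j, 0 ≤ r j) → ∀ j, 0 ≤ prodSeq r j := by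
    intro r hr j; induction j with
    | zero => norm_num [prodSeq]
    | succ j ih => exact mul_nonneg ih (hr j)
  have hnuP : ∀ j : ℕ, nu (M + j) = prodSeq rp j := by
    intro j
    rw [hnudef]
    simp only
    rw [if_pos (by omega : M ≤ M + (j:ℤ))]
    congr 1
    omega
  have hnuMn : ∀ j : ℕ, 1 ≤ j → nu (M - j) = prodSeq rm j := by
    intro j hj
    rw [hnudef]
    simp only
    rw [if_neg (by omega : ¬ M ≤ M - (j:ℤ))]
    congr 1
    omega
  have hnuM : nu M = 1 := by
    have := hnuP 0
    simpa [prodSeq] using this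
  refine ⟨nu, ?_, hnuM, ?_, ?_, ?_⟩
  · -- nonneg
    intro x
    rw [hnudef]
    simp only
    split
    · exact hP0 rp hrp0 _
    · exact hP0 rm hrm0 _
  · -- detailed balance
    intro x
    rcases le_or_gt M x with hx | hx
    · set j : ℕ := (x - M).toNat with hjdef
      have hxj : x = M + (j:ℤ) := by omega
      have h1 : nu x = prodSeq rp j := by rw [hxj, hnuP]
      have h2 : nu (x+1) = prodSeq rp (j+1) := by
        have hxx : x + 1 = M + ((j+1 : ℕ):ℤ) := by push_cast; omega
        rw [hxx, hnuP]
      rw [h1, h2]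
      show prodSeq rp j * rp j * (F x * (1-q)) = prodSeq rp j * ((1 - F x) * q)
      have hde : F (M + (j:ℤ)) = F x := by rw [← hxj]
      have hden := hrpden j
      rw [hrpdef]
      simp only
      rw [hde]
      rw [hde] at hden
      rw [mul_assoc, div_mul_cancel₀ _ hden.ne']
    · set j : ℕ := (M - x - 1).toNat with hjdef
      have hxj : x = M - (j:ℤ) - 1 := by omega
      have h1 : nu x = prodSeq rm (j+1) := by
        have hxx : x = M - ((j+1 : ℕ):ℤ) := by push_cast; omega
        rw [hxx, hnuMn (j+1) (by omega)]
      have h2 : nu (x+1) = prodSeq rm j := by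
        rcases Nat.eq_zero_or_pos j with hj0 | hjpos
        · have hxx : x + 1 = M := by omega
          rw [hxx, hnuM, hj0]
          simp [prodSeq]
        · have hxx : x + 1 = M - (j:ℤ) := by omega
          rw [hxx, hnuMn j hjpos]
      rw [h1, h2]
      show prodSeq rm j * (F x * (1-q)) = prodSeq rm j * rm j * ((1 - F x) * q)
      have hde : F (M - (j:ℤ) - 1) = F x := by rw [← hxj]
      have hden := hrmden j
      rw [hrmdef]
      simp only
      rw [hde]
      rw [hde] at hden
      rw [mul_assoc, div_mul_cancel₀ _ hden.ne']
  · -- right bound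
    intro j
    rw [hnuP j]
    have hre : ∀ i : ℕ, rp i ≤ Real.exp (-(2 * (F (M + i) - q))) := by
      intro i
      have hc : 0 ≤ F (M + i) - q := by
        have := hFq (M + i) (by omega); linarith
      have hc1 : q + (F (M + i) - q) ≤ 1 := by have := hF1 (M + i); linarith
      have hineq := ratio_bound q (F (M + i) - q) hq0 hq1 hc hc1
      rw [hrpdef]
      simp only
      rw [div_le_iff₀ (hrpden i)]
      calc (1 - F (M + i)) * q = (1 - q - (F (M + i) - q)) * q := by ring
        _ ≤ Real.exp (-(2*(F (M + i) - q))) * ((q + (F (M + i) - q)) * (1-q)) := hineq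
        _ = Real.exp (-(2 * (F (M + i) - q))) * (F (M + i) * (1-q)) := by ring
    -- product bound
    induction j with
    | zero => simp [prodSeq]
    | succ j ih =>
        have h1 : prodSeq rp (j+1) = prodSeq rp j * rp j := rfl
        rw [h1]
        calc prodSeq rp j * rp j
            ≤ Real.exp (-(2 * ∑ i ∈ Finset.range j, (F (M + i) - q)))
              * Real.exp (-(2 * (F (M + j) - q))) :=
              mul_le_mul ih (hre j) (hrp0 j) (Real.exp_pos _).le
          _ = Real.exp (-(2 * ∑ i ∈ Finset.range (j+1), (F (M + i) - q))) := by
              rw [← Real.exp_add, Finset.sum_range_succ]; congr 1; ring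
  · -- left bound
    intro j
    rcases Nat.eq_zero_or_pos j with hj0 | hjpos
    · subst hj0
      simp only [Nat.cast_zero, sub_zero, Finset.range_zero, Finset.sum_empty, mul_zero, neg_zero,
        Real.exp_zero]
      rw [hnuM]
    · rw [hnuMn j hjpos]
      have hre : ∀ i : ℕ, rm i ≤ Real.exp (-(2 * (q - F (M - i - 1)))) := by
        intro i
        have hc : 0 ≤ q - F (M - i - 1) := by
          have := hFq' (M - i - 1) (by omega); linarith
        have hc1 : (1-q) + (q - F (M - i - 1)) ≤ 1 := by have := hF0 (M - i - 1); linarith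
        have hineq := ratio_bound (1-q) (q - F (M - i - 1)) (by linarith) (by linarith) hc hc1
        rw [hrmdef]
        simp only
        rw [div_le_iff₀ (hrmden i)]
        calc F (M - i - 1) * (1-q)
            = (1 - (1-q) - (q - F (M - i - 1))) * (1-q) := by ring
          _ ≤ Real.exp (-(2*(q - F (M - i - 1))))
              * (((1-q) + (q - F (M - i - 1))) * (1 - (1-q))) := hineq
          _ = Real.exp (-(2 * (q - F (M - i - 1)))) * ((1 - F (M - i - 1)) * q) := by ring
      have hprodbound : prodSeq rm j
          ≤ Real.exp (-(2 * ∑ i ∈ Finset.range j, (q - F (M - i - 1)))) := by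
        clear hjpos
        induction j with
        | zero => simp [prodSeq]
        | succ j ih =>
            have h1 : prodSeq rm (j+1) = prodSeq rm j * rm j := rfl
            rw [h1]
            calc prodSeq rm j * rm j
                ≤ Real.exp (-(2 * ∑ i ∈ Finset.range j, (q - F (M - i - 1))))
                  * Real.exp (-(2 * (q - F (M - j - 1)))) :=
                  mul_le_mul ih (hre j) (hrm0 j) (Real.exp_pos _).le
              _ = Real.exp (-(2 * ∑ i ∈ Finset.range (j+1), (q - F (M - i - 1)))) := by
                  rw [← Real.exp_add, Finset.sum_range_succ]; congr 1; ring
      calc prodSeq rm j ≤ _ := hprodbound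
        _ ≤ Real.exp (-(2 * ∑ i ∈ Finset.range j, (q - F (M - i)))) := by
            apply Real.exp_le_exp.2
            have hterm : ∀ i ∈ Finset.range j, q - F (M - i) ≤ q - F (M - i - 1) := by
              intro i _
              have := hFmono (M - i - 1) (M - i) (by omega)
              linarith
            have := Finset.sum_le_sum hterm
            nlinarith [this]


end FrugalAux

set_option maxHeartbeats 2000000 in
/-- If the Frugal-1U process estimating the `q = h/k` quantile
starts at the true `q`-quantile (`m̃₀ = M` with `F(M) = q`), then for every
`t ≥ 1` and `ε ∈ (0,1)`, `Pr[|F(m̃_t) − q| > 2√(δ·ln(t/ε))] ≤ ε`. -/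
theorem frugal1U_quantile_stability
    {Ω : Type*} [MeasureSpace Ω] [IsProbabilityMeasure (ℙ : Measure Ω)]
    (μ : Measure ℤ) [IsProbabilityMeasure μ]
    (h k : ℕ) (hh : 0 < h) (hhk : h < k)
    (q : ℝ) (hq : q = (h : ℝ) / k)
    (δ : ℝ) (hδ0 : 0 < δ) (hδq : δ < min q (1 - q))
    (hmass : ∀ x : ℤ, (μ {x}).toReal ≤ δ)
    (F : ℤ → ℝ) (hF : ∀ x : ℤ, F x = (μ {y : ℤ | y ≤ x}).toReal)
    (s : ℕ → Ω → ℤ) (u : ℕ → Ω → ℝ)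
    (hs_meas : ∀ t, Measurable (s t)) (hu_meas : ∀ t, Measurable (u t))
    (hlaw : ∀ t : ℕ, Measure.map (fun ω => (s t ω, u t ω)) ℙ
      = μ.prod (volume.restrict (Set.Icc (0:ℝ) 1)))
    (hindep : iIndepFun
      (fun t ω => (s t ω, u t ω)) ℙ)
    (m : ℕ → Ω → ℤ)
    (M : ℤ) (hquantile : F M = q)
    (hm0 : ∀ ω, m 0 ω = M)
    (hrec : ∀ t ω, m (t+1) ω =
      if m t ω < s (t+1) ω ∧ 1 - q < u (t+1) ω then m t ω + 1
      else if s (t+1) ω < m t ω ∧ q < u (t+1) ω then m t ω - 1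
      else m t ω)
    (t : ℕ) (ht : 1 ≤ t) (ε : ℝ) (hε0 : 0 < ε) (hε1 : ε < 1) :
    ℙ {ω | 2 * Real.sqrt (δ * Real.log (t / ε)) < |F (m t ω) - q|}
      ≤ ENNReal.ofReal ε := by
  classical
  have hk0 : (0:ℝ) < k := by exact_mod_cast hh.trans hhk
  have hh0 : (0:ℝ) < h := by exact_mod_cast hh
  have hq0 : 0 < q := by rw [hq]; positivity
  have hq1 : q < 1 := by rw [hq, div_lt_one hk0]; exact_mod_cast hhk
  have hδq' : δ < q := lt_of_lt_of_le hδq (min_le_left _ _)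
  have hδq1 : δ < 1 - q := lt_of_lt_of_le hδq (min_le_right _ _)
  have hδhalf : δ ≤ 1/2 := by linarith
  -- facts about F
  have hF0 : ∀ x, 0 ≤ F x := fun x => (hF x) ▸ ENNReal.toReal_nonneg
  have hF1 : ∀ x, F x ≤ 1 := by
    intro x; rw [hF x]
    have h1 : μ {y : ℤ | y ≤ x} ≤ 1 := prob_le_one
    calc (μ {y : ℤ | y ≤ x}).toReal ≤ (1:ENNReal).toReal :=
          ENNReal.toReal_mono ENNReal.one_ne_top h1
      _ = 1 := ENNReal.toReal_one
  have hFmono : ∀ x y : ℤ, x ≤ y → F x ≤ F y := by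
    intro x y hxy; rw [hF x, hF y]
    exact ENNReal.toReal_mono (measure_ne_top μ _)
      (measure_mono (fun z hz => le_trans hz hxy))
  have hFstep : ∀ x : ℤ, F (x+1) ≤ F x + δ := by
    intro x
    have hseteq : {y : ℤ | y ≤ x+1} = {y : ℤ | y ≤ x} ∪ {x+1} := by
      ext z; simp only [Set.mem_setOf_eq, Set.mem_union, Set.mem_singleton_iff]; omega
    have hdisj : Disjoint {y : ℤ | y ≤ x} ({x+1} : Set ℤ) := by
      rw [Set.disjoint_singleton_right]; simp only [Set.mem_setOf_eq]; omega
    have hmu : μ {y : ℤ | y ≤ x+1} = μ {y : ℤ | y ≤ x} + μ {x+1} := by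
      rw [hseteq, measure_union hdisj (measurableSet_singleton _)]
    rw [hF (x+1), hF x, hmu, ENNReal.toReal_add (measure_ne_top μ _) (measure_ne_top μ _)]
    have := hmass (x+1)
    linarith
  -- construct the reversible measure
  obtain ⟨nu, hnu0, hnuM, hDB, hnuP, hnuMn⟩ :=
    FrugalAux.nu_exists q hq0 hq1 F hF0 hF1 hFmono M hquantile
  have hlawb := FrugalAux.law_bound μ q hq0 hq1 F hF hF1 hF0 s u hs_meas hu_meas hlaw hindep
    m M hm0 hrec nu hnu0 (le_of_eq hnuM.symm) hDB
  -- range of the process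
  have hrange : ∀ n (ω : Ω), M - n ≤ m n ω ∧ m n ω ≤ M + n := by
    intro n; induction n with
    | zero => intro ω; rw [hm0 ω]; constructor <;> simp
    | succ n ih =>
        intro ω
        obtain ⟨h1, h2⟩ := ih ω
        rw [hrec n ω]
        split_ifs <;> constructor <;> push_cast <;> omega
  set a : ℝ := 2 * Real.sqrt (δ * Real.log (t / ε)) with hadef
  have htpos : (0:ℝ) < t := by exact_mod_cast ht
  have hL0 : 0 < Real.log (t/ε) := by
    apply Real.log_pos
    rw [lt_div_iff₀ hε0]
    have h1 : (1:ℝ) ≤ t := by exact_mod_cast ht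
    nlinarith
  have ha0 : 0 < a := by rw [hadef]; positivity
  by_cases htt : 2 ≤ t
  · -- main case : t ≥ 2
    set ep : ℕ → ℝ := fun j => F (M + j) - q with hepdef
    set em : ℕ → ℝ := fun j => q - F (M - j) with hemdef
    set Sp : Finset ℕ := (Finset.Icc 1 t).filter (fun j => a < ep j) with hSpdef
    set Sm : Finset ℕ := (Finset.Icc 1 t).filter (fun j => a < em j) with hSmdef
    have hsub : {ω | a < |F (m t ω) - q|} ⊆
        (⋃ j ∈ Sp, {ω | m t ω = M + (j:ℤ)}) ∪ (⋃ j ∈ Sm, {ω | m t ω = M - (j:ℤ)}) := by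
      intro ω hω
      simp only [Set.mem_setOf_eq] at hω
      obtain ⟨hr1, hr2⟩ := hrange t ω
      rcases lt_trichotomy (m t ω) M with hlt | heq | hgt
      · right
        set j : ℕ := (M - m t ω).toNat with hjdef
        have hj1 : 1 ≤ j := by omega
        have hjt : j ≤ t := by omega
        have hmj : m t ω = M - (j:ℤ) := by omega
        have hFle : F (m t ω) ≤ q := hquantile ▸ hFmono _ M hlt.le
        have habs : |F (m t ω) - q| = em j := by
          rw [hemdef]
          simp only
          rw [← hmj, abs_of_nonpos (by linarith)]
          ring
        rw [habs] at hω
        apply Set.mem_iUnion₂.2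
        refine ⟨j, Finset.mem_filter.2 ⟨Finset.mem_Icc.2 ⟨hj1, hjt⟩, hω⟩, ?_⟩
        simp only [Set.mem_setOf_eq]
        omega
      · exfalso
        rw [heq, hquantile, sub_self, abs_zero] at hω
        linarith
      · left
        set j : ℕ := (m t ω - M).toNat with hjdef
        have hj1 : 1 ≤ j := by omega
        have hjt : j ≤ t := by omega
        have hmj : m t ω = M + (j:ℤ) := by omega
        have hFge : q ≤ F (m t ω) := hquantile ▸ hFmono M _ hgt.le
        have habs : |F (m t ω) - q| = ep j := by
          rw [hepdef]
          simp only
          rw [← hmj, abs_of_nonneg (by linarith)]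
        rw [habs] at hω
        apply Set.mem_iUnion₂.2
        refine ⟨j, Finset.mem_filter.2 ⟨Finset.mem_Icc.2 ⟨hj1, hjt⟩, hω⟩, ?_⟩
        simp only [Set.mem_setOf_eq]
        omega
    have hup_sum : ℙ (⋃ j ∈ Sp, {ω | m t ω = M + (j:ℤ)}) ≤ ENNReal.ofReal (ε/2) := by
      calc ℙ (⋃ j ∈ Sp, {ω | m t ω = M + (j:ℤ)})
          ≤ ∑ j ∈ Sp, ℙ {ω | m t ω = M + (j:ℤ)} := measure_biUnion_finset_le _ _
        _ ≤ ∑ j ∈ Sp, ENNReal.ofReal (nu (M + (j:ℤ))) :=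
            Finset.sum_le_sum (fun j _ => hlawb t (M + (j:ℤ)))
        _ = ENNReal.ofReal (∑ j ∈ Sp, nu (M + (j:ℤ))) :=
            (ENNReal.ofReal_sum_of_nonneg (fun j _ => hnu0 _)).symm
        _ ≤ ENNReal.ofReal (ε/2) := by
            apply ENNReal.ofReal_le_ofReal
            have heq1 : ∑ j ∈ Sp, nu (M + (j:ℤ))
                = ∑ j ∈ Finset.Icc 1 t, (if a < ep j then nu (M + (j:ℤ)) else 0) := by
              rw [hSpdef, Finset.sum_filter]
            rw [heq1, hadef]
            apply FrugalAux.tail_sum t htt ε δ hε0 hε1 hδ0 hδhalf ep ?_ ?_ ?_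
              (fun j => nu (M + (j:ℤ))) (fun j => hnu0 _) ?_
            · rw [hepdef]; simp [hquantile]
            · intro i
              rw [hepdef]
              simp only
              have := hFmono (M + (i:ℤ)) (M + ((i+1:ℕ):ℤ)) (by push_cast; omega)
              linarith
            · intro i
              rw [hepdef]
              simp only
              have hcast : (M + ((i+1:ℕ):ℤ)) = (M + (i:ℤ)) + 1 := by push_cast; ring
              rw [hcast]
              have := hFstep (M + (i:ℤ))
              linarith
            · intro j
              have h2 : (∑ i ∈ Finset.range j, ep i)
                  = ∑ i ∈ Finset.range j, (F (M + (i:ℤ)) - q) := by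
                simp only [hepdef]
              rw [h2]
              exact hnuP j
    have hdn_sum : ℙ (⋃ j ∈ Sm, {ω | m t ω = M - (j:ℤ)}) ≤ ENNReal.ofReal (ε/2) := by
      calc ℙ (⋃ j ∈ Sm, {ω | m t ω = M - (j:ℤ)})
          ≤ ∑ j ∈ Sm, ℙ {ω | m t ω = M - (j:ℤ)} := measure_biUnion_finset_le _ _
        _ ≤ ∑ j ∈ Sm, ENNReal.ofReal (nu (M - (j:ℤ))) :=
            Finset.sum_le_sum (fun j _ => hlawb t (M - (j:ℤ)))
        _ = ENNReal.ofReal (∑ j ∈ Sm, nu (M - (j:ℤ))) :=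
            (ENNReal.ofReal_sum_of_nonneg (fun j _ => hnu0 _)).symm
        _ ≤ ENNReal.ofReal (ε/2) := by
            apply ENNReal.ofReal_le_ofReal
            have heq1 : ∑ j ∈ Sm, nu (M - (j:ℤ))
                = ∑ j ∈ Finset.Icc 1 t, (if a < em j then nu (M - (j:ℤ)) else 0) := by
              rw [hSmdef, Finset.sum_filter]
            rw [heq1, hadef]
            apply FrugalAux.tail_sum t htt ε δ hε0 hε1 hδ0 hδhalf em ?_ ?_ ?_
              (fun j => nu (M - (j:ℤ))) (fun j => hnu0 _) ?_
            · rw [hemdef]; simp [hquantile]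
            · intro i
              rw [hemdef]
              simp only
              have := hFmono (M - ((i+1:ℕ):ℤ)) (M - (i:ℤ)) (by push_cast; omega)
              linarith
            · intro i
              rw [hemdef]
              simp only
              have hcast : (M - (i:ℤ)) = (M - ((i+1:ℕ):ℤ)) + 1 := by push_cast; ring
              have := hFstep (M - ((i+1:ℕ):ℤ))
              rw [← hcast] at this
              linarith
            · intro j
              have h2 : (∑ i ∈ Finset.range j, em i)
                  = ∑ i ∈ Finset.range j, (q - F (M - (i:ℤ))) := by
                simp only [hemdef]
              rw [h2]
              exact hnuMn j
    calc ℙ {ω | a < |F (m t ω) - q|}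
        ≤ ℙ ((⋃ j ∈ Sp, {ω | m t ω = M + (j:ℤ)}) ∪ (⋃ j ∈ Sm, {ω | m t ω = M - (j:ℤ)})) :=
          measure_mono hsub
      _ ≤ ℙ (⋃ j ∈ Sp, {ω | m t ω = M + (j:ℤ)}) + ℙ (⋃ j ∈ Sm, {ω | m t ω = M - (j:ℤ)}) :=
          measure_union_le _ _
      _ ≤ ENNReal.ofReal (ε/2) + ENNReal.ofReal (ε/2) := add_le_add hup_sum hdn_sum
      _ = ENNReal.ofReal ε := by
          rw [← ENNReal.ofReal_add (by positivity) (by positivity)]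
          norm_num
  · -- t = 1
    have ht1 : t = 1 := by omega
    subst ht1
    by_cases hda : a < δ
    · have hsub : {ω | a < |F (m 1 ω) - q|} ⊆
          ((fun ω => (s 1 ω, u 1 ω)) ⁻¹' (Set.Ioi M ×ˢ Set.Ioi (1-q))) ∪
          ((fun ω => (s 1 ω, u 1 ω)) ⁻¹' (Set.Iio M ×ˢ Set.Ioi q)) := by
        intro ω hω
        simp only [Set.mem_setOf_eq] at hω
        have hr := hrec 0 ω
        rw [hm0 ω] at hr
        by_cases h1 : M < s 1 ω ∧ 1 - q < u 1 ω
        · left; simp only [Set.mem_preimage, Set.mem_prod, Set.mem_Ioi]; exact h1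
        · by_cases h2 : s 1 ω < M ∧ q < u 1 ω
          · right; simp only [Set.mem_preimage, Set.mem_prod, Set.mem_Iio, Set.mem_Ioi]; exact h2
          · exfalso
            rw [if_neg h1, if_neg h2] at hr
            rw [hr, hquantile, sub_self, abs_zero] at hω
            linarith
      have hεbig : 1/2 ≤ ε := by
        have hL : δ * Real.log ((1:ℕ)/ε) < δ*(δ/4) := by
          have ha2 : a^2 = 4*(δ*Real.log (((1:ℕ):ℝ)/ε)) := by
            rw [hadef, mul_pow, Real.sq_sqrt (by positivity)]; ring
          nlinarith [ha0, hda, hδ0]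
        have hL' : Real.log (((1:ℕ):ℝ)/ε) < δ/4 :=
          lt_of_mul_lt_mul_left hL hδ0.le
        have hεe : ε = Real.exp (-Real.log (((1:ℕ):ℝ)/ε)) := by
          rw [← Real.log_inv, Real.exp_log (by positivity)]
          simp
        have h3 : 1 - δ/4 ≤ ε := by
          rw [hεe]
          have := Real.add_one_le_exp (-Real.log (((1:ℕ):ℝ)/ε))
          linarith
        linarith
      calc ℙ {ω | a < |F (m 1 ω) - q|}
          ≤ ℙ ((fun ω => (s 1 ω, u 1 ω)) ⁻¹' (Set.Ioi M ×ˢ Set.Ioi (1-q)))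
            + ℙ ((fun ω => (s 1 ω, u 1 ω)) ⁻¹' (Set.Iio M ×ˢ Set.Ioi q)) :=
            (measure_mono hsub).trans (measure_union_le _ _)
        _ = ENNReal.ofReal ((1 - F M) * q) + ENNReal.ofReal (F (M-1) * (1-q)) := by
            rw [FrugalAux.up_event μ s u q hq0 hq1 F hF hF1 hF0 hs_meas hu_meas hlaw 1 M,
              FrugalAux.down_event μ s u q hq0 hq1 F hF hF0 hs_meas hu_meas hlaw 1 M]
        _ ≤ ENNReal.ofReal ε := by
            rw [← ENNReal.ofReal_add (by nlinarith [hF1 M]) (by nlinarith [hF0 (M-1)])]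
            apply ENNReal.ofReal_le_ofReal
            have hFM1 : F (M-1) ≤ q := hquantile ▸ hFmono (M-1) M (by omega)
            rw [hquantile]
            nlinarith [sq_nonneg (q - 1/2), hF0 (M-1)]
    · push_neg at hda
      have hE : {ω | a < |F (m 1 ω) - q|} = ∅ := by
        ext ω
        simp only [Set.mem_setOf_eq, Set.mem_empty_iff_false, iff_false, not_lt]
        have hr := hrec 0 ω
        rw [hm0 ω] at hr
        have hFM1 : F (M-1) ≤ q := hquantile ▸ hFmono (M-1) M (by omega)
        have hFM1' : q ≤ F (M-1) + δ := by
          have h5 := hFstep (M-1)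
          rw [show M - 1 + 1 = M by omega, hquantile] at h5
          linarith
        have hFMp : F (M+1) ≤ q + δ := by
          have h5 := hFstep M
          rw [hquantile] at h5
          linarith
        have hFMp' : q ≤ F (M+1) := hquantile ▸ hFmono M (M+1) (by omega)
        have hbound : |F (m 1 ω) - q| ≤ δ := by
          split_ifs at hr with h1 h2
          · rw [hr, abs_of_nonneg (by linarith)]; linarith
          · rw [hr, abs_of_nonpos (by linarith)]; linarith
          · rw [hr, hquantile, sub_self, abs_zero]; linarith
        linarith
      rw [hE, measure_empty]
      exact zero_le
end
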